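/- arXiv:2209.10162 — 6 statements merged into one kernel-verified Lean document; each statement's English description precedes it below -/
import Mathlib

section
/- Let d ∈ ℕ and let Ψ = (ψ₀,…,ψ_d) ∈ ℝ^{d+1} be symmetric, i.e. ψ_j = ψ_{d−j} for all j ∈ {0,…,d}. Then for every x ∈ [−1,1], Im⟨0|U(x,Ψ)|0⟩ = Im⟨0|W(x)·U(x,Ψ)·W(x)|0⟩, where ⟨0|M|0⟩ denotes the (0,0) entry of a 2×2 matrix M. -/
open scoped Real
noncomputable section

/-- The QSP signal matrix `W(x)`: diagonal entries `x`, off-diagonal entries `i√(1-x²)`. -/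
def Wmat (x : ℝ) : Matrix (Fin 2) (Fin 2) ℂ :=
  !![(x : ℂ), Complex.I * (Real.sqrt (1 - x ^ 2) : ℂ);
     Complex.I * (Real.sqrt (1 - x ^ 2) : ℂ), (x : ℂ)]

/-- `exp(i ψ Z)` where `Z = diag(1, -1)`. -/
def expZ (ψ : ℝ) : Matrix (Fin 2) (Fin 2) ℂ :=
  !![Complex.exp (Complex.I * (ψ : ℂ)), 0; 0, Complex.exp (-(Complex.I * (ψ : ℂ)))]

/-- The QSP unitary `U(x, Ψ) = e^{iψ₀Z} ∏_{j=1}^{d} (W(x) e^{iψ_j Z})`,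
with phase factors `ψ₀, …, ψ_d` given as the first `d+1` entries of `Ψ : ℕ → ℝ`. -/
def Umat (x : ℝ) (d : ℕ) (Ψ : ℕ → ℝ) : Matrix (Fin 2) (Fin 2) ℂ :=
  expZ (Ψ 0) * (((List.range d).map fun j => Wmat x * expZ (Ψ (j + 1))).prod)

/-- `g(x, Ψ) = Im ⟨0|U(x,Ψ)|0⟩`. -/
def gfun (x : ℝ) (d : ℕ) (Ψ : ℕ → ℝ) : ℝ := (Umat x d Ψ 0 0).im

/-- The partial derivative `∂g(x,Ψ)/∂ψ_k`. -/
def gfunPD (x : ℝ) (d k : ℕ) (Ψ : ℕ → ℝ) : ℝ :=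
  deriv (fun t => gfun x d (Function.update Ψ k t)) (Ψ k)

/-- The second partial derivative `∂²g(x,Ψ)/∂ψ_r∂ψ_s`. -/
def gfunPD2 (x : ℝ) (d r s : ℕ) (Ψ : ℕ → ℝ) : ℝ :=
  deriv (fun t => gfunPD x d s (Function.update Ψ r t)) (Ψ r)

/-- The full symmetric phase-factor sequence
`Ψ(Φ, n) = (φ_{n-1}, …, φ₁, 2φ₀, φ₁, …, φ_{n-1})` of length `2n-1`
associated with even-parity reduced phase factors `Φ`. -/
def pad (Φ : ℕ →₀ ℝ) (n : ℕ) : ℕ → ℝ := fun j =>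
  if j + 1 < n then Φ (n - 1 - j) else if j + 1 = n then 2 * Φ 0 else Φ (j + 1 - n)

/-- One plus the largest element of the support of `Φ`; thus `Φ k = 0` for all `k ≥ nOf Φ`. -/
def nOf (Φ : ℕ →₀ ℝ) : ℕ := Φ.support.sup id + 1

/-- `g(x, Φ)` for even-parity reduced phase factors `Φ` (independent of the padding length). -/
def gred (x : ℝ) (Φ : ℕ →₀ ℝ) : ℝ := gfun x (2 * nOf Φ - 2) (pad Φ (nOf Φ))

/-- The `j`-th coefficient in the even Chebyshev expansion `f = ∑_j c_j T_{2j}` on `[-1,1]`,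
defined via the Fourier-type integral formula, which recovers the coefficients whenever
`f` restricted to `[-1,1]` is such a finite combination. -/
def chebCoeff (f : ℝ → ℝ) (j : ℕ) : ℝ :=
  (if j = 0 then 1 / (2 * π) else 1 / π) *
    ∫ θ in (0:ℝ)..(2 * π), f (Real.cos θ) * Real.cos (2 * j * θ)

/-- `F(Φ)`: the Chebyshev-coefficient sequence of `g(·, Φ)`, so that
`g(x,Φ) = ∑_j (F Φ)_j T_{2j}(x)` on `[-1,1]`. -/
def Fmap (Φ : ℕ →₀ ℝ) (j : ℕ) : ℝ := chebCoeff (fun x => gred x Φ) j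

/-- The ℓ¹ norm of a finitely supported sequence. -/
def l1 (Φ : ℕ →₀ ℝ) : ℝ := ∑ k ∈ Φ.support, |Φ k|

/-- Partial derivative `∂g(x,Φ)/∂φ_k`. -/
def gredPD (k : ℕ) (x : ℝ) (Φ : ℕ →₀ ℝ) : ℝ :=
  deriv (fun t => gred x (Φ.update k t)) (Φ k)

/-- Partial derivative `∂F/∂φ_k (Φ)` (the `k`-th column of the Jacobian `DF(Φ)`). -/
def FmapPD (k : ℕ) (Φ : ℕ →₀ ℝ) (j : ℕ) : ℝ :=
  deriv (fun t => Fmap (Φ.update k t) j) (Φ k)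

/-- Second partial derivative `∂²F/∂φ_r∂φ_s (Φ)`. -/
def FmapPD2 (r s : ℕ) (Φ : ℕ →₀ ℝ) (j : ℕ) : ℝ :=
  deriv (fun t => FmapPD s (Φ.update r t) j) (Φ r)

/-- `h(x) = 2cosh(2x) - 2`. -/
def hfun (x : ℝ) : ℝ := 2 * Real.cosh (2 * x) - 2

/-- `H(x) = 4x - sinh(2x)`. -/
def Hfun (x : ℝ) : ℝ := 4 * x - Real.sinh (2 * x)

/-- `r_Φ = arccosh(2)/2 = log(2+√3)/2 ≈ 0.658`, the unique positive solution of `h(r) = 2`. -/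
def rPhi : ℝ := Real.log (2 + Real.sqrt 3) / 2

/-- `r_c = H(r_Φ) ≈ 0.902`. -/
def rc : ℝ := Hfun rPhi

/-- The inverse `H⁻¹` of `H` on `[0, r_c]` (the preimage taken in `[0, r_Φ]`). -/
def Hinv (y : ℝ) : ℝ := Function.invFunOn Hfun (Set.Icc 0 rPhi) y

/-- `r̃_Φ = arcsinh(arccosh 2)/2 ≈ 0.544`. -/
def rPhiT : ℝ := Real.arsinh (Real.log (2 + Real.sqrt 3)) / 2

/-- `r̃_c = H(r̃_Φ) ≈ 0.861`. -/
def rcT : ℝ := Hfun rPhiT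

/-- `γ(r) = (1/2)∫₀¹ h(r + s((1/2)sinh(2r) - r)) ds`. -/
def gam (r : ℝ) : ℝ := (1 / 2) * ∫ s in (0:ℝ)..1, hfun (r + s * (Real.sinh (2 * r) / 2 - r))

/-- The real sequence space ℓ¹. -/
abbrev ell1 : Type := lp (fun _ : ℕ => ℝ) 1

theorem finsupp_memℓp (Φ : ℕ →₀ ℝ) : Memℓp (fun k => (Φ k : ℝ)) 1 := by
  apply memℓp_gen
  apply summable_of_ne_finset_zero (s := Φ.support)
  intro i hi
  simp [Finsupp.notMem_support_iff.mp hi]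

/-- A finitely supported sequence as an element of ℓ¹. -/
def toL1 (Φ : ℕ →₀ ℝ) : ell1 := ⟨fun k => Φ k, finsupp_memℓp Φ⟩

open Matrix

/-- The SU(2)-type structure: `M 1 1 = conj (M 0 0)` and `M 1 0 = - conj (M 0 1)`. -/
def SU2p (M : Matrix (Fin 2) (Fin 2) ℂ) : Prop :=
  M 1 1 = starRingEnd ℂ (M 0 0) ∧ M 1 0 = - starRingEnd ℂ (M 0 1)

lemma SU2p_one : SU2p 1 := by
  constructor <;> simp [Matrix.one_apply]

lemma SU2p_mul {A B : Matrix (Fin 2) (Fin 2) ℂ} (hA : SU2p A) (hB : SU2p B) :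
    SU2p (A * B) := by
  obtain ⟨hA1, hA2⟩ := hA
  obtain ⟨hB1, hB2⟩ := hB
  have cA01 : starRingEnd ℂ (A 0 1) = - A 1 0 := by rw [hA2]; ring
  have cB01 : starRingEnd ℂ (B 0 1) = - B 1 0 := by rw [hB2]; ring
  have cA10 : starRingEnd ℂ (A 1 0) = - A 0 1 := by rw [hA2]; simp
  have cB10 : starRingEnd ℂ (B 1 0) = - B 0 1 := by rw [hB2]; simp
  constructor <;>
  · simp only [Matrix.mul_apply, Fin.sum_univ_two, map_add, _root_.map_mul, hA1, hB1,
      cA01, cB01, cA10, cB10, map_neg, Complex.conj_conj]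
    ring

lemma SU2p_Wmat (x : ℝ) : SU2p (Wmat x) := by
  constructor <;>
  · simp [Wmat, Complex.conj_ofReal, _root_.map_mul]
    try ring

lemma SU2p_expZ (ψ : ℝ) : SU2p (expZ ψ) := by
  constructor
  · simp only [expZ, Matrix.cons_val', Matrix.cons_val_zero, Matrix.cons_val_one,
      Matrix.head_cons, Matrix.empty_val', Matrix.cons_val_fin_one, Matrix.head_fin_const,
      Matrix.of_apply]
    rw [← Complex.exp_conj]
    congr 1
    rw [_root_.map_mul, Complex.conj_I, Complex.conj_ofReal]
    ring
  · simp [expZ]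

lemma SU2p_Umat (x : ℝ) (d : ℕ) (Ψ : ℕ → ℝ) : SU2p (Umat x d Ψ) := by
  have hl : ∀ n : ℕ, SU2p (((List.range n).map fun j => Wmat x * expZ (Ψ (j + 1))).prod) := by
    intro n
    induction n with
    | zero => simpa using SU2p_one
    | succ n ih =>
      rw [List.range_succ, List.map_append, List.prod_append]
      exact SU2p_mul ih (by simpa using SU2p_mul (SU2p_Wmat x) (SU2p_expZ _))
  exact SU2p_mul (SU2p_expZ _) (hl d)

lemma Wmat_transpose (x : ℝ) : (Wmat x)ᵀ = Wmat x := by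
  ext i j
  fin_cases i <;> fin_cases j <;> simp [Wmat]

lemma expZ_transpose (ψ : ℝ) : (expZ ψ)ᵀ = expZ ψ := by
  ext i j
  fin_cases i <;> fin_cases j <;> simp [expZ]

lemma prod_range_transpose (d : ℕ) (f : ℕ → Matrix (Fin 2) (Fin 2) ℂ) :
    (((List.range d).map f).prod)ᵀ = ((List.range d).map fun j => (f (d - 1 - j))ᵀ).prod := by
  induction d with
  | zero => simp
  | succ d ih =>
    conv_lhs => rw [List.range_succ, List.map_append, List.prod_append]
    rw [Matrix.transpose_mul]
    conv_rhs => rw [List.range_succ_eq_map]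
    simp only [List.map_cons, List.map_map, List.prod_cons]
    have h0 : d + 1 - 1 - 0 = d := by omega
    have h1 : (fun j => (f (d + 1 - 1 - j))ᵀ) ∘ Nat.succ = fun j => (f (d - 1 - j))ᵀ := by
      funext j
      simp only [Function.comp_apply]
      have e : d + 1 - 1 - Nat.succ j = d - 1 - j := by omega
      rw [e]
    rw [h0, h1]
    simp [ih]

lemma prod_shift (d : ℕ) (E : ℕ → Matrix (Fin 2) (Fin 2) ℂ) (W : Matrix (Fin 2) (Fin 2) ℂ) :
    ((List.range d).map fun j => E j * W).prod * E d
      = E 0 * ((List.range d).map fun j => W * E (j + 1)).prod := by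
  induction d with
  | zero => simp
  | succ d ih =>
    rw [List.range_succ]
    simp only [List.map_append, List.prod_append, List.map_cons, List.map_nil,
      List.prod_cons, List.prod_nil, mul_one]
    calc ((List.range d).map fun j => E j * W).prod * (E d * W) * E (d + 1)
        = (((List.range d).map fun j => E j * W).prod * E d) * (W * E (d + 1)) := by
          simp [mul_assoc]
      _ = E 0 * ((List.range d).map fun j => W * E (j + 1)).prod * (W * E (d + 1)) := by
          rw [ih]
      _ = _ := by simp [mul_assoc]

lemma Umat_congr (x : ℝ) (d : ℕ) {Ψ₁ Ψ₂ : ℕ → ℝ} (h : ∀ j ≤ d, Ψ₁ j = Ψ₂ j) :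
    Umat x d Ψ₁ = Umat x d Ψ₂ := by
  unfold Umat
  rw [h 0 (Nat.zero_le d)]
  have : ((List.range d).map fun j => Wmat x * expZ (Ψ₁ (j + 1)))
      = ((List.range d).map fun j => Wmat x * expZ (Ψ₂ (j + 1))) := by
    apply List.map_congr_left
    intro j hj
    rw [List.mem_range] at hj
    rw [h (j + 1) (by omega)]
  rw [this]

lemma Umat_transpose (x : ℝ) (d : ℕ) (Ψ : ℕ → ℝ) :
    (Umat x d Ψ)ᵀ = Umat x d (fun j => Ψ (d - j)) := by
  unfold Umat
  rw [Matrix.transpose_mul, expZ_transpose, prod_range_transpose]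
  have hmap : ((List.range d).map fun j => (Wmat x * expZ (Ψ (d - 1 - j + 1)))ᵀ)
      = ((List.range d).map fun j => expZ (Ψ (d - j)) * Wmat x) := by
    apply List.map_congr_left
    intro j hj
    rw [List.mem_range] at hj
    rw [Matrix.transpose_mul, expZ_transpose, Wmat_transpose]
    have e : d - 1 - j + 1 = d - j := by omega
    rw [e]
  rw [hmap]
  have := prod_shift d (fun j => expZ (Ψ (d - j))) (Wmat x)
  simp only [Nat.sub_self] at this
  rw [this]

lemma Umat_symm (x : ℝ) (d : ℕ) (Ψ : ℕ → ℝ) (hsym : ∀ j ≤ d, Ψ j = Ψ (d - j)) :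
    (Umat x d Ψ)ᵀ = Umat x d Ψ := by
  rw [Umat_transpose]
  exact Umat_congr x d (fun j hj => (hsym j hj).symm)

/-- Phase-factor padding: for symmetric phase factors `Ψ`,
`Im⟨0|U(x,Ψ)|0⟩ = Im⟨0|W(x)U(x,Ψ)W(x)|0⟩` for all `x ∈ [-1,1]`. -/
theorem qsp_phase_factor_padding (d : ℕ) (Ψ : ℕ → ℝ)
    (hsym : ∀ j ≤ d, Ψ j = Ψ (d - j)) :
    ∀ x ∈ Set.Icc (-1 : ℝ) 1,
      (Umat x d Ψ 0 0).im = ((Wmat x * Umat x d Ψ * Wmat x) 0 0).im := by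
  intro x hx
  set U := Umat x d Ψ with hU
  obtain ⟨h11, h10⟩ := SU2p_Umat x d Ψ
  rw [← hU] at h11 h10
  have hsymU : U 1 0 = U 0 1 := by
    have := Umat_symm x d Ψ hsym
    calc U 1 0 = (Umat x d Ψ)ᵀ 0 1 := rfl
      _ = U 0 1 := by rw [this]
  have hre : (U 0 1).re = 0 := by
    have : U 0 1 = - starRingEnd ℂ (U 0 1) := by
      have h := h10
      rw [hsymU] at h
      exact h
    have := congrArg Complex.re this
    simp at this
    linarith
  have hs2 : (Real.sqrt (1 - x ^ 2)) ^ 2 = 1 - x ^ 2 := by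
    apply Real.sq_sqrt
    nlinarith [hx.1, hx.2]
  set s := Real.sqrt (1 - x ^ 2) with hs
  have hexp : (Wmat x * U * Wmat x) 0 0
      = (x : ℂ) ^ 2 * U 0 0 + (Complex.I * s) * (x : ℂ) * (U 1 0 + U 0 1)
        + (Complex.I * s) ^ 2 * U 1 1 := by
    simp only [Matrix.mul_apply, Fin.sum_univ_two, Wmat, Matrix.cons_val', Matrix.cons_val_zero,
      Matrix.cons_val_one, Matrix.head_cons, Matrix.empty_val', Matrix.cons_val_fin_one,
      Matrix.head_fin_const, Matrix.of_apply]
    ring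
  rw [hexp, hsymU, h11]
  have hI2 : (Complex.I * (s : ℂ)) ^ 2 = ((-(s ^ 2) : ℝ) : ℂ) := by
    push_cast
    rw [mul_pow, Complex.I_sq]
    ring
  rw [hI2]
  simp only [Complex.add_im, Complex.mul_im, Complex.ofReal_re, Complex.ofReal_im,
    Complex.mul_re, Complex.I_re, Complex.I_im, Complex.conj_re, Complex.conj_im,
    Complex.add_re, Complex.add_im]
  have hpow : ((x : ℂ) ^ 2) = ((x ^ 2 : ℝ) : ℂ) := by push_cast; ring
  rw [hpow]
  simp only [Complex.ofReal_re, Complex.ofReal_im, Complex.mul_im, Complex.mul_re]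
  rw [hre, hs2]
  ring
end
end

section
/- For every d ∈ ℕ and every Ψ = (ψ₀,…,ψ_d) ∈ ℝ^{d+1}, the function x ↦ g(x,Ψ) agrees on [−1,1] with a real polynomial of degree at most d; writing g(x,Ψ) = Σ_{k=0}^{d} a_k·T_k(x) for its Chebyshev expansion, one has Σ_{k=0}^{d} |a_k| ≤ sinh(Σ_{j=0}^{d} |ψ_j|). -/
open scoped Real
noncomputable section

namespace QSPProof

open Complex

/-- Shift coefficients: represents multiplication by `e^{inθ}`. -/
def shift (n : ℤ) (c : ℤ →₀ ℂ) : ℤ →₀ ℂ := Finsupp.mapDomain (· + n) c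

lemma shift_apply (n : ℤ) (c : ℤ →₀ ℂ) (m : ℤ) : shift n c m = c (m - n) := by
  have hinj : Function.Injective (· + n : ℤ → ℤ) := add_left_injective n
  have h := Finsupp.mapDomain_apply hinj c (m - n)
  simpa [shift] using h

/-- Evaluation of a coefficient vector as a trigonometric sum. -/
def Ev (c : ℤ →₀ ℂ) (θ : ℝ) : ℂ :=
  c.sum fun m z => z * Complex.exp ((((m : ℝ) * θ : ℝ) : ℂ) * Complex.I)

lemma Ev_sum_of_subset {c : ℤ →₀ ℂ} {s : Finset ℤ} (h : c.support ⊆ s) (θ : ℝ) :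
    Ev c θ = ∑ m ∈ s, c m * Complex.exp ((((m : ℝ) * θ : ℝ) : ℂ) * Complex.I) :=
  Finsupp.sum_of_support_subset c h _ (fun i _ => by simp)

lemma Ev_add (c c' : ℤ →₀ ℂ) (θ : ℝ) : Ev (c + c') θ = Ev c θ + Ev c' θ :=
  Finsupp.sum_add_index' (fun _ => by simp) (fun _ _ _ => add_mul _ _ _)

lemma Ev_sub (c c' : ℤ →₀ ℂ) (θ : ℝ) : Ev (c - c') θ = Ev c θ - Ev c' θ :=
  Finsupp.sum_sub_index (fun _ _ _ => sub_mul _ _ _)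

lemma Ev_smul (w : ℂ) (c : ℤ →₀ ℂ) (θ : ℝ) : Ev (w • c) θ = w * Ev c θ := by
  rw [Ev, Ev, Finsupp.sum_smul_index (fun i => by simp), Finsupp.mul_sum]
  exact Finsupp.sum_congr fun i _ => by ring

lemma Ev_shift (n : ℤ) (c : ℤ →₀ ℂ) (θ : ℝ) :
    Ev (shift n c) θ = Complex.exp ((((n : ℝ) * θ : ℝ) : ℂ) * Complex.I) * Ev c θ := by
  rw [Ev, shift, Finsupp.sum_mapDomain_index_inj (add_left_injective n), Ev, Finsupp.mul_sum]
  refine Finsupp.sum_congr fun m _ => ?_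
  rw [mul_comm (Complex.exp _) _, mul_assoc, ← Complex.exp_add]
  congr 2
  push_cast
  ring

def nIm (c : ℤ →₀ ℂ) : ℝ := ∑ m ∈ c.support, |(c m).im|
def nRe (c : ℤ →₀ ℂ) : ℝ := ∑ m ∈ c.support, |(c m).re|

lemma nIm_eq_sum {c : ℤ →₀ ℂ} {s : Finset ℤ} (h : c.support ⊆ s) :
    nIm c = ∑ m ∈ s, |(c m).im| :=
  Finset.sum_subset h (fun x _ hx => by simp [Finsupp.notMem_support_iff.mp hx])

lemma nRe_eq_sum {c : ℤ →₀ ℂ} {s : Finset ℤ} (h : c.support ⊆ s) :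
    nRe c = ∑ m ∈ s, |(c m).re| :=
  Finset.sum_subset h (fun x _ hx => by simp [Finsupp.notMem_support_iff.mp hx])

lemma nIm_nonneg (c : ℤ →₀ ℂ) : 0 ≤ nIm c := Finset.sum_nonneg fun _ _ => abs_nonneg _
lemma nRe_nonneg (c : ℤ →₀ ℂ) : 0 ≤ nRe c := Finset.sum_nonneg fun _ _ => abs_nonneg _

lemma nIm_add_le (c c' : ℤ →₀ ℂ) : nIm (c + c') ≤ nIm c + nIm c' := by
  classical
  rw [nIm_eq_sum (Finsupp.support_add (g₁ := c) (g₂ := c')),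
    nIm_eq_sum (s := c.support ∪ c'.support) Finset.subset_union_left,
    nIm_eq_sum (s := c.support ∪ c'.support) Finset.subset_union_right,
    ← Finset.sum_add_distrib]
  refine Finset.sum_le_sum fun i _ => ?_
  rw [Finsupp.add_apply, Complex.add_im]
  exact abs_add_le _ _

lemma nRe_add_le (c c' : ℤ →₀ ℂ) : nRe (c + c') ≤ nRe c + nRe c' := by
  classical
  rw [nRe_eq_sum (Finsupp.support_add (g₁ := c) (g₂ := c')),
    nRe_eq_sum (s := c.support ∪ c'.support) Finset.subset_union_left,
    nRe_eq_sum (s := c.support ∪ c'.support) Finset.subset_union_right,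
    ← Finset.sum_add_distrib]
  refine Finset.sum_le_sum fun i _ => ?_
  rw [Finsupp.add_apply, Complex.add_re]
  exact abs_add_le _ _

lemma nIm_neg (c : ℤ →₀ ℂ) : nIm (-c) = nIm c := by
  rw [nIm, nIm, Finsupp.support_neg]
  exact Finset.sum_congr rfl fun m _ => by simp

lemma nRe_neg (c : ℤ →₀ ℂ) : nRe (-c) = nRe c := by
  rw [nRe, nRe, Finsupp.support_neg]
  exact Finset.sum_congr rfl fun m _ => by simp

lemma nIm_sub_le (c c' : ℤ →₀ ℂ) : nIm (c - c') ≤ nIm c + nIm c' := by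
  rw [sub_eq_add_neg]
  simpa [nIm_neg] using nIm_add_le c (-c')

lemma nRe_sub_le (c c' : ℤ →₀ ℂ) : nRe (c - c') ≤ nRe c + nRe c' := by
  rw [sub_eq_add_neg]
  simpa [nRe_neg] using nRe_add_le c (-c')

lemma shift_support_subset (n : ℤ) (c : ℤ →₀ ℂ) :
    (shift n c).support ⊆ c.support.image (· + n) := by
  intro m hm
  have h : c (m - n) ≠ 0 := by rw [← shift_apply n c m]; exact Finsupp.mem_support_iff.mp hm
  exact Finset.mem_image.mpr ⟨m - n, Finsupp.mem_support_iff.mpr h, by ring⟩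

lemma nIm_shift (n : ℤ) (c : ℤ →₀ ℂ) : nIm (shift n c) = nIm c := by
  rw [nIm_eq_sum (s := c.support.image (· + n)) (shift_support_subset n c),
    Finset.sum_image (fun a _ b _ h => by omega)]
  refine Finset.sum_congr rfl fun m _ => ?_
  rw [shift_apply]
  simp

lemma nRe_shift (n : ℤ) (c : ℤ →₀ ℂ) : nRe (shift n c) = nRe c := by
  rw [nRe_eq_sum (s := c.support.image (· + n)) (shift_support_subset n c),
    Finset.sum_image (fun a _ b _ h => by omega)]
  refine Finset.sum_congr rfl fun m _ => ?_
  rw [shift_apply]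
  simp

lemma nIm_smul_le (w : ℂ) (c : ℤ →₀ ℂ) :
    nIm (w • c) ≤ |w.re| * nIm c + |w.im| * nRe c := by
  rw [nIm_eq_sum (Finsupp.support_smul (b := w) (g := c)), nIm, nRe,
    Finset.mul_sum, Finset.mul_sum, ← Finset.sum_add_distrib]
  refine Finset.sum_le_sum fun m _ => ?_
  rw [Finsupp.smul_apply, smul_eq_mul, Complex.mul_im]
  calc |w.re * (c m).im + w.im * (c m).re|
      ≤ |w.re * (c m).im| + |w.im * (c m).re| := abs_add_le _ _
    _ = |w.re| * |(c m).im| + |w.im| * |(c m).re| := by rw [abs_mul, abs_mul]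

lemma nRe_smul_le (w : ℂ) (c : ℤ →₀ ℂ) :
    nRe (w • c) ≤ |w.re| * nRe c + |w.im| * nIm c := by
  rw [nRe_eq_sum (Finsupp.support_smul (b := w) (g := c)), nIm, nRe,
    Finset.mul_sum, Finset.mul_sum, ← Finset.sum_add_distrib]
  refine Finset.sum_le_sum fun m _ => ?_
  rw [Finsupp.smul_apply, smul_eq_mul, Complex.mul_re]
  calc |w.re * (c m).re - w.im * (c m).im|
      ≤ |w.re * (c m).re| + |w.im * (c m).im| := abs_sub _ _
    _ = |w.re| * |(c m).re| + |w.im| * |(c m).im| := by rw [abs_mul, abs_mul]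

end QSPProof

namespace QSPProof
open Complex

lemma ofReal_cos_eq (r : ℝ) : ((Real.cos r : ℝ) : ℂ)
    = (Complex.exp ((r : ℂ) * Complex.I) + Complex.exp (-((r : ℂ) * Complex.I))) / 2 := by
  rw [show -((r : ℂ) * Complex.I) = ((-r : ℝ) : ℂ) * Complex.I by push_cast; ring,
    Complex.exp_mul_I, Complex.exp_mul_I]
  push_cast
  simp only [Complex.cos_neg, Complex.sin_neg, ← Complex.ofReal_cos, ← Complex.ofReal_sin]
  ring

lemma I_mul_ofReal_sin_eq (r : ℝ) : Complex.I * ((Real.sin r : ℝ) : ℂ)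
    = (Complex.exp ((r : ℂ) * Complex.I) - Complex.exp (-((r : ℂ) * Complex.I))) / 2 := by
  rw [show -((r : ℂ) * Complex.I) = ((-r : ℝ) : ℂ) * Complex.I by push_cast; ring,
    Complex.exp_mul_I, Complex.exp_mul_I]
  push_cast
  simp only [Complex.cos_neg, Complex.sin_neg, ← Complex.ofReal_cos, ← Complex.ofReal_sin]
  ring

/-- Coefficient sequences for `U₀₀ + U₀₁` and `U₀₀ - U₀₁`. -/
def cs (Ψ : ℕ → ℝ) : ℕ → (ℤ →₀ ℂ) × (ℤ →₀ ℂ)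
  | 0 => (Finsupp.single 0 (Complex.exp (((Ψ 0 : ℝ) : ℂ) * Complex.I)),
          Finsupp.single 0 (Complex.exp (((Ψ 0 : ℝ) : ℂ) * Complex.I)))
  | n + 1 =>
      (((Real.cos (Ψ (n + 1)) : ℝ) : ℂ) • shift 1 (cs Ψ n).1
         + (Complex.I * ((Real.sin (Ψ (n + 1)) : ℝ) : ℂ)) • shift (-1) (cs Ψ n).2,
       (Complex.I * ((Real.sin (Ψ (n + 1)) : ℝ) : ℂ)) • shift 1 (cs Ψ n).1
         + ((Real.cos (Ψ (n + 1)) : ℝ) : ℂ) • shift (-1) (cs Ψ n).2)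

lemma cs_fst_apply (Ψ : ℕ → ℝ) (n : ℕ) (m : ℤ) :
    (cs Ψ (n + 1)).1 m = ((Real.cos (Ψ (n + 1)) : ℝ) : ℂ) * (cs Ψ n).1 (m - 1)
      + Complex.I * ((Real.sin (Ψ (n + 1)) : ℝ) : ℂ) * (cs Ψ n).2 (m + 1) := by
  show (_ + _ : ℤ →₀ ℂ) m = _
  rw [Finsupp.add_apply, Finsupp.smul_apply, Finsupp.smul_apply, smul_eq_mul, smul_eq_mul,
    shift_apply, shift_apply]
  ring_nf

lemma cs_snd_apply (Ψ : ℕ → ℝ) (n : ℕ) (m : ℤ) :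
    (cs Ψ (n + 1)).2 m = Complex.I * ((Real.sin (Ψ (n + 1)) : ℝ) : ℂ) * (cs Ψ n).1 (m - 1)
      + ((Real.cos (Ψ (n + 1)) : ℝ) : ℂ) * (cs Ψ n).2 (m + 1) := by
  show (_ + _ : ℤ →₀ ℂ) m = _
  rw [Finsupp.add_apply, Finsupp.smul_apply, Finsupp.smul_apply, smul_eq_mul, smul_eq_mul,
    shift_apply, shift_apply]
  ring_nf

lemma cs_eq_zero (Ψ : ℕ → ℝ) (n : ℕ) : ∀ (m : ℤ), (n : ℤ) < |m| →
    (cs Ψ n).1 m = 0 ∧ (cs Ψ n).2 m = 0 := by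
  induction n with
  | zero =>
    intro m h
    have hm : ¬((0 : ℤ) = m) := by intro h0; rw [← h0] at h; simp at h
    have hm2 : ¬(m = 0) := fun h0 => hm h0.symm
    constructor <;> · simp [cs, Finsupp.single_apply, hm, hm2]
  | succ n ih =>
    intro m h
    have h1 : (n : ℤ) < |m - 1| := by
      rcases abs_cases m with ⟨h', _⟩ | ⟨h', _⟩ <;> rcases abs_cases (m - 1) with ⟨h'', _⟩ | ⟨h'', _⟩ <;>
        push_cast at h ⊢ <;> omega
    have h2 : (n : ℤ) < |m + 1| := by
      rcases abs_cases m with ⟨h', _⟩ | ⟨h', _⟩ <;> rcases abs_cases (m + 1) with ⟨h'', _⟩ | ⟨h'', _⟩ <;>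
        push_cast at h ⊢ <;> omega
    obtain ⟨hc1, he1⟩ := ih (m - 1) h1
    obtain ⟨hc2, he2⟩ := ih (m + 1) h2
    rw [cs_fst_apply, cs_snd_apply, hc1, he2]
    simp

lemma cs_symm (Ψ : ℕ → ℝ) (n : ℕ) : ∀ (m : ℤ),
    (cs Ψ n).1 (-m) = (cs Ψ n).2 m ∧ (cs Ψ n).2 (-m) = (cs Ψ n).1 m := by
  induction n with
  | zero =>
    intro m
    have hee : (cs Ψ 0).1 = (cs Ψ 0).2 := rfl
    rcases eq_or_ne m 0 with rfl | hm
    · constructor <;> simp [hee]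
    · have h1 : ¬((0 : ℤ) = m) := fun h => hm h.symm
      have h2 : ¬((0 : ℤ) = -m) := fun h => hm (by omega)
      have h3 : ¬(m = 0) := fun h0 => hm h0
      have h4 : ¬(-m = 0) := fun h0 => hm (by omega)
      constructor <;> simp [cs, Finsupp.single_apply, h1, h2, h3, h4]
  | succ n ih =>
    intro m
    obtain ⟨hc1, he1⟩ := ih (m + 1)
    obtain ⟨hc2, he2⟩ := ih (m - 1)
    have e1 : -m - 1 = -(m + 1) := by ring
    have e2 : -m + 1 = -(m - 1) := by ring
    constructor
    · rw [cs_fst_apply, cs_snd_apply, e1, e2, hc1, he2]; ring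
    · rw [cs_fst_apply, cs_snd_apply, e1, e2, hc1, he2]; ring

lemma sinh_step {S t : ℝ} (hS : 0 ≤ S) (ht : 0 ≤ t) :
    Real.sinh S + t * Real.cosh S ≤ Real.sinh (S + t) ∧
    Real.cosh S + t * Real.sinh S ≤ Real.cosh (S + t) := by
  rw [Real.sinh_add, Real.cosh_add]
  have h1 := Real.one_le_cosh t
  have h2 : t ≤ Real.sinh t := Real.self_le_sinh_iff.2 ht
  have h3 : 0 ≤ Real.sinh S := by rw [← Real.sinh_zero]; exact Real.sinh_le_sinh.2 hS
  have h4 : 0 < Real.cosh S := Real.cosh_pos S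
  constructor <;> nlinarith

lemma cs_norm (Ψ : ℕ → ℝ) (n : ℕ) :
    nIm (cs Ψ n).1 + nIm (cs Ψ n).2 ≤ 2 * Real.sinh (∑ j ∈ Finset.range (n + 1), |Ψ j|) ∧
    nRe (cs Ψ n).1 + nRe (cs Ψ n).2 ≤ 2 * Real.cosh (∑ j ∈ Finset.range (n + 1), |Ψ j|) := by
  induction n with
  | zero =>
    have hsupp : (Finsupp.single (0:ℤ) (Complex.exp (((Ψ 0 : ℝ) : ℂ) * Complex.I))).support
        ⊆ ({0} : Finset ℤ) := Finsupp.support_single_subset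
    have h1 : nIm (cs Ψ 0).1 = |Real.sin (Ψ 0)| := by
      show nIm (Finsupp.single (0:ℤ) _) = _
      rw [nIm_eq_sum hsupp, Finset.sum_singleton, Finsupp.single_eq_same, Complex.exp_mul_I]
      simp [← Complex.ofReal_cos, ← Complex.ofReal_sin]
    have h2 : nRe (cs Ψ 0).1 = |Real.cos (Ψ 0)| := by
      show nRe (Finsupp.single (0:ℤ) _) = _
      rw [nRe_eq_sum hsupp, Finset.sum_singleton, Finsupp.single_eq_same, Complex.exp_mul_I]
      simp [← Complex.ofReal_cos, ← Complex.ofReal_sin]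
    have h3 : nIm (cs Ψ 0).2 = |Real.sin (Ψ 0)| := h1
    have h4 : nRe (cs Ψ 0).2 = |Real.cos (Ψ 0)| := h2
    rw [Finset.sum_range_one, h1, h2, h3, h4]
    have k1 : |Real.sin (Ψ 0)| ≤ Real.sinh |Ψ 0| :=
      (Real.abs_sin_le_abs).trans (Real.self_le_sinh_iff.2 (abs_nonneg _))
    have k2 : |Real.cos (Ψ 0)| ≤ Real.cosh |Ψ 0| :=
      (Real.abs_cos_le_one _).trans (Real.one_le_cosh _)
    constructor <;> linarith
  | succ n ih =>
    obtain ⟨ihI, ihR⟩ := ih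
    set S := ∑ j ∈ Finset.range (n + 1), |Ψ j| with hS
    have hS0 : 0 ≤ S := Finset.sum_nonneg fun _ _ => abs_nonneg _
    have hsum : ∑ j ∈ Finset.range (n + 2), |Ψ j| = S + |Ψ (n + 1)| := Finset.sum_range_succ _ _
    set t := |Ψ (n + 1)| with ht
    have ht0 : 0 ≤ t := abs_nonneg _
    set w1 := ((Real.cos (Ψ (n + 1)) : ℝ) : ℂ) with hw1
    set w2 := Complex.I * ((Real.sin (Ψ (n + 1)) : ℝ) : ℂ) with hw2
    have hw1re : |w1.re| ≤ 1 := by rw [hw1, Complex.ofReal_re]; exact Real.abs_cos_le_one _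
    have hw1im : w1.im = 0 := by rw [hw1, Complex.ofReal_im]
    have hw2re : w2.re = 0 := by simp [hw2]
    have hw2im : |w2.im| ≤ t := by
      rw [hw2]; simp only [Complex.mul_im, Complex.I_re, Complex.I_im, Complex.ofReal_re,
        Complex.ofReal_im, zero_mul, one_mul, zero_add, mul_zero]
      exact Real.abs_sin_le_abs
    set c := (cs Ψ n).1
    set e := (cs Ψ n).2
    have e1 : nIm (cs Ψ (n+1)).1 ≤ nIm c + t * nRe e := by
      show nIm (w1 • shift 1 c + w2 • shift (-1) e) ≤ _
      refine (nIm_add_le _ _).trans ?_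
      have b1 := (nIm_smul_le w1 (shift 1 c))
      have b2 := (nIm_smul_le w2 (shift (-1) e))
      rw [nIm_shift, nRe_shift, hw1im, abs_zero, zero_mul, add_zero] at b1
      rw [nIm_shift, nRe_shift, hw2re, abs_zero, zero_mul, zero_add] at b2
      have n1 := nIm_nonneg c
      have n3 := nRe_nonneg e
      have m1 : |w1.re| * nIm c ≤ nIm c := by nlinarith
      have m2 : |w2.im| * nRe e ≤ t * nRe e := mul_le_mul_of_nonneg_right hw2im n3
      linarith
    have e2 : nIm (cs Ψ (n+1)).2 ≤ nIm e + t * nRe c := by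
      show nIm (w2 • shift 1 c + w1 • shift (-1) e) ≤ _
      refine (nIm_add_le _ _).trans ?_
      have b1 := (nIm_smul_le w2 (shift 1 c))
      have b2 := (nIm_smul_le w1 (shift (-1) e))
      rw [nIm_shift, nRe_shift, hw2re, abs_zero, zero_mul, zero_add] at b1
      rw [nIm_shift, nRe_shift, hw1im, abs_zero, zero_mul, add_zero] at b2
      have n1 := nIm_nonneg e
      have n2 := nRe_nonneg c
      have m1 : |w1.re| * nIm e ≤ nIm e := by nlinarith
      have m2 : |w2.im| * nRe c ≤ t * nRe c := mul_le_mul_of_nonneg_right hw2im n2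
      linarith
    have e3 : nRe (cs Ψ (n+1)).1 ≤ nRe c + t * nIm e := by
      show nRe (w1 • shift 1 c + w2 • shift (-1) e) ≤ _
      refine (nRe_add_le _ _).trans ?_
      have b1 := (nRe_smul_le w1 (shift 1 c))
      have b2 := (nRe_smul_le w2 (shift (-1) e))
      rw [nIm_shift, nRe_shift, hw1im, abs_zero, zero_mul, add_zero] at b1
      rw [nIm_shift, nRe_shift, hw2re, abs_zero, zero_mul, zero_add] at b2
      have n1 := nRe_nonneg c
      have n2 := nIm_nonneg e
      have m1 : |w1.re| * nRe c ≤ nRe c := by nlinarith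
      have m2 : |w2.im| * nIm e ≤ t * nIm e := mul_le_mul_of_nonneg_right hw2im n2
      linarith
    have e4 : nRe (cs Ψ (n+1)).2 ≤ nRe e + t * nIm c := by
      show nRe (w2 • shift 1 c + w1 • shift (-1) e) ≤ _
      refine (nRe_add_le _ _).trans ?_
      have b1 := (nRe_smul_le w2 (shift 1 c))
      have b2 := (nRe_smul_le w1 (shift (-1) e))
      rw [nIm_shift, nRe_shift, hw2re, abs_zero, zero_mul, zero_add] at b1
      rw [nIm_shift, nRe_shift, hw1im, abs_zero, zero_mul, add_zero] at b2
      have n1 := nRe_nonneg e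
      have n2 := nIm_nonneg c
      have m1 : |w1.re| * nRe e ≤ nRe e := by nlinarith
      have m2 : |w2.im| * nIm c ≤ t * nIm c := mul_le_mul_of_nonneg_right hw2im n2
      linarith
    obtain ⟨k1, k2⟩ := sinh_step hS0 ht0
    rw [hsum]
    constructor
    · calc nIm (cs Ψ (n+1)).1 + nIm (cs Ψ (n+1)).2
          ≤ (nIm c + nIm e) + t * (nRe c + nRe e) := by linarith
        _ ≤ 2 * Real.sinh S + t * (2 * Real.cosh S) := by nlinarith
        _ = 2 * (Real.sinh S + t * Real.cosh S) := by ring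
        _ ≤ 2 * Real.sinh (S + t) := by linarith
    · calc nRe (cs Ψ (n+1)).1 + nRe (cs Ψ (n+1)).2
          ≤ (nRe c + nRe e) + t * (nIm c + nIm e) := by linarith
        _ ≤ 2 * Real.cosh S + t * (2 * Real.sinh S) := by nlinarith
        _ = 2 * (Real.cosh S + t * Real.sinh S) := by ring
        _ ≤ 2 * Real.cosh (S + t) := by linarith

end QSPProof

namespace QSPProof
open Complex

lemma Umat_succ (x : ℝ) (d : ℕ) (Ψ : ℕ → ℝ) :
    Umat x (d + 1) Ψ = Umat x d Ψ * (Wmat x * expZ (Ψ (d + 1))) := by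
  unfold Umat
  rw [List.range_succ, List.map_append, List.prod_append, List.map_singleton,
    List.prod_singleton, ← mul_assoc]

lemma mul_apply00 (A B : Matrix (Fin 2) (Fin 2) ℂ) :
    (A * B) 0 0 = A 0 0 * B 0 0 + A 0 1 * B 1 0 := by
  rw [Matrix.mul_apply, Fin.sum_univ_two]

lemma mul_apply01 (A B : Matrix (Fin 2) (Fin 2) ℂ) :
    (A * B) 0 1 = A 0 0 * B 0 1 + A 0 1 * B 1 1 := by
  rw [Matrix.mul_apply, Fin.sum_univ_two]

lemma cos_eq' (r : ℝ) : ((Real.cos r : ℝ) : ℂ)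
    = (Complex.exp (Complex.I * (r : ℂ)) + Complex.exp (-(Complex.I * (r : ℂ)))) / 2 := by
  rw [mul_comm Complex.I ((r : ℝ) : ℂ)]
  exact ofReal_cos_eq r

lemma I_sin_eq' (r : ℝ) : Complex.I * ((Real.sin r : ℝ) : ℂ)
    = (Complex.exp (Complex.I * (r : ℂ)) - Complex.exp (-(Complex.I * (r : ℂ)))) / 2 := by
  rw [mul_comm Complex.I ((r : ℝ) : ℂ)]
  exact I_mul_ofReal_sin_eq r

lemma Umat_eq_Ev (Ψ : ℕ → ℝ) {x : ℝ} (hx1 : -1 ≤ x) (hx2 : x ≤ 1) (n : ℕ) :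
    Ev (cs Ψ n).1 (Real.arccos x) = Umat x n Ψ 0 0 + Umat x n Ψ 0 1 ∧
    Ev (cs Ψ n).2 (Real.arccos x) = Umat x n Ψ 0 0 - Umat x n Ψ 0 1 := by
  set θ := Real.arccos x with hθ
  have hcos : Real.cos θ = x := Real.cos_arccos hx1 hx2
  have hsin : Real.sin θ = Real.sqrt (1 - x ^ 2) := Real.sin_arccos x
  induction n with
  | zero =>
    have hU : Umat x 0 Ψ = expZ (Ψ 0) := by simp [Umat]
    have hEv : Ev (cs Ψ 0).1 θ = Complex.exp (((Ψ 0 : ℝ) : ℂ) * Complex.I) := by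
      show Finsupp.sum (Finsupp.single (0 : ℤ) _) _ = _
      rw [Finsupp.sum_single_index (by simp)]
      norm_num
    have hEv2 : Ev (cs Ψ 0).2 θ = Complex.exp (((Ψ 0 : ℝ) : ℂ) * Complex.I) := hEv
    rw [hU, hEv, hEv2]
    constructor <;> · simp [expZ, mul_comm]
  | succ n ih =>
    obtain ⟨ih1, ih2⟩ := ih
    set ψ := Ψ (n + 1) with hψ
    set A := Umat x n Ψ 0 0 with hA
    set B := Umat x n Ψ 0 1 with hB
    have hsh1 : ∀ p : ℤ →₀ ℂ, Ev (shift 1 p) θ = Complex.exp ((θ : ℂ) * Complex.I) * Ev p θ := by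
      intro p
      rw [Ev_shift]
      norm_num
    have hsh2 : ∀ p : ℤ →₀ ℂ,
        Ev (shift (-1) p) θ = Complex.exp (-((θ : ℂ) * Complex.I)) * Ev p θ := by
      intro p
      rw [Ev_shift, show ((((-1 : ℤ) : ℝ) * θ : ℝ) : ℂ) = ((-θ : ℝ) : ℂ) by push_cast; ring]
      push_cast
      rw [neg_mul]
    have hM00 : (Wmat x * expZ ψ) 0 0 = (x : ℂ) * Complex.exp (Complex.I * (ψ : ℂ)) := by
      rw [mul_apply00]; simp [Wmat, expZ]
    have hM10 : (Wmat x * expZ ψ) 1 0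
        = Complex.I * ((Real.sqrt (1 - x ^ 2) : ℝ) : ℂ) * Complex.exp (Complex.I * (ψ : ℂ)) := by
      rw [Matrix.mul_apply, Fin.sum_univ_two]; simp [Wmat, expZ]
    have hM01 : (Wmat x * expZ ψ) 0 1
        = Complex.I * ((Real.sqrt (1 - x ^ 2) : ℝ) : ℂ) * Complex.exp (-(Complex.I * (ψ : ℂ))) := by
      rw [mul_apply01]; simp [Wmat, expZ]
    have hM11 : (Wmat x * expZ ψ) 1 1 = (x : ℂ) * Complex.exp (-(Complex.I * (ψ : ℂ))) := by
      rw [Matrix.mul_apply, Fin.sum_univ_two]; simp [Wmat, expZ]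
    have hxc : ((x : ℝ) : ℂ) = ((Real.cos θ : ℝ) : ℂ) := by rw [hcos]
    have hsc : ((Real.sqrt (1 - x ^ 2) : ℝ) : ℂ) = ((Real.sin θ : ℝ) : ℂ) := by rw [hsin]
    constructor
    · show Ev (_ + _ : ℤ →₀ ℂ) θ = _
      rw [Ev_add, Ev_smul, Ev_smul, hsh1, hsh2, ih1, ih2, Umat_succ, mul_apply00, mul_apply01,
        ← hA, ← hB, hM00, hM10, hM01, hM11, hxc, hsc, cos_eq' ψ, I_sin_eq' ψ,
        ofReal_cos_eq θ, I_mul_ofReal_sin_eq θ]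
      ring
    · show Ev (_ + _ : ℤ →₀ ℂ) θ = _
      rw [Ev_add, Ev_smul, Ev_smul, hsh1, hsh2, ih1, ih2, Umat_succ, mul_apply00, mul_apply01,
        ← hA, ← hB, hM00, hM10, hM01, hM11, hxc, hsc, cos_eq' ψ, I_sin_eq' ψ,
        ofReal_cos_eq θ, I_mul_ofReal_sin_eq θ]
      ring

/-- The Chebyshev coefficient vector of `U₀₀`. -/
def csum (Ψ : ℕ → ℝ) (d : ℕ) : ℤ →₀ ℂ := (2⁻¹ : ℂ) • ((cs Ψ d).1 + (cs Ψ d).2)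

lemma csum_apply (Ψ : ℕ → ℝ) (d : ℕ) (m : ℤ) :
    csum Ψ d m = 2⁻¹ * ((cs Ψ d).1 m + (cs Ψ d).2 m) := by
  rw [csum, Finsupp.smul_apply, Finsupp.add_apply, smul_eq_mul]

lemma csum_symm (Ψ : ℕ → ℝ) (d : ℕ) (m : ℤ) : csum Ψ d (-m) = csum Ψ d m := by
  rw [csum_apply, csum_apply, (cs_symm Ψ d m).1, (cs_symm Ψ d m).2]
  ring

lemma csum_eq_zero (Ψ : ℕ → ℝ) (d : ℕ) {m : ℤ} (h : (d : ℤ) < |m|) : csum Ψ d m = 0 := by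
  rw [csum_apply, (cs_eq_zero Ψ d m h).1, (cs_eq_zero Ψ d m h).2]
  ring

lemma csum_support (Ψ : ℕ → ℝ) (d : ℕ) :
    (csum Ψ d).support ⊆ Finset.Icc (-(d : ℤ)) d := by
  intro m hm
  rw [Finset.mem_Icc]
  by_contra hc
  push_neg at hc
  have hd : (d : ℤ) < |m| := by
    rcases abs_cases m with ⟨h1, h2⟩ | ⟨h1, h2⟩ <;> rw [h1] <;> omega
  exact Finsupp.mem_support_iff.mp hm (csum_eq_zero Ψ d hd)

lemma Ev_csum (Ψ : ℕ → ℝ) {x : ℝ} (hx1 : -1 ≤ x) (hx2 : x ≤ 1) (d : ℕ) :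
    Ev (csum Ψ d) (Real.arccos x) = Umat x d Ψ 0 0 := by
  obtain ⟨h1, h2⟩ := Umat_eq_Ev Ψ hx1 hx2 d
  rw [csum, Ev_smul, Ev_add, h1, h2]
  ring

lemma nIm_csum_le (Ψ : ℕ → ℝ) (d : ℕ) :
    nIm (csum Ψ d) ≤ Real.sinh (∑ j ∈ Finset.range (d + 1), |Ψ j|) := by
  have h1 := nIm_smul_le (2⁻¹ : ℂ) ((cs Ψ d).1 + (cs Ψ d).2)
  have h2 := nIm_add_le (cs Ψ d).1 (cs Ψ d).2
  have h3 := (cs_norm Ψ d).1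
  rw [show ((2⁻¹ : ℂ)).re = 2⁻¹ by norm_num, show ((2⁻¹ : ℂ)).im = 0 by norm_num,
    abs_zero, zero_mul, add_zero, show |(2⁻¹ : ℝ)| = 2⁻¹ by norm_num] at h1
  rw [csum]
  linarith

lemma term_im (z : ℂ) (r : ℝ) :
    (z * Complex.exp ((r : ℂ) * Complex.I)).im = z.re * Real.sin r + z.im * Real.cos r := by
  rw [Complex.exp_mul_I]
  simp only [Complex.mul_im, Complex.add_re, Complex.add_im, Complex.mul_re,
    Complex.sin_ofReal_re, Complex.sin_ofReal_im, Complex.cos_ofReal_re, Complex.cos_ofReal_im,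
    Complex.I_re, Complex.I_im]
  ring

lemma Icc_succ_decomp (d : ℕ) :
    Finset.Icc (-((d : ℤ) + 1)) ((d : ℤ) + 1)
      = insert ((d : ℤ) + 1) (insert (-((d : ℤ) + 1)) (Finset.Icc (-(d : ℤ)) (d : ℤ))) := by
  ext m
  simp only [Finset.mem_Icc, Finset.mem_insert]
  omega

lemma im_sum (c : ℤ →₀ ℂ) (hsym : ∀ m, c (-m) = c m) (θ : ℝ) (d : ℕ) :
    (∑ m ∈ Finset.Icc (-(d : ℤ)) d,
        c m * Complex.exp ((((m : ℝ) * θ : ℝ) : ℂ) * Complex.I)).im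
      = ∑ k ∈ Finset.range (d + 1),
          (if k = 0 then (c 0).im else (c (k : ℤ)).im + (c (-(k : ℤ))).im)
            * Real.cos ((k : ℝ) * θ) := by
  induction d with
  | zero =>
    rw [show (-(0:ℕ) : ℤ) = 0 by norm_num]
    norm_num [Finset.Icc_self]
  | succ d ih =>
    have hc1 : ((d : ℤ) + 1) ∉ insert (-((d : ℤ) + 1)) (Finset.Icc (-(d : ℤ)) (d : ℤ)) := by
      simp only [Finset.mem_insert, Finset.mem_Icc]
      omega
    have hc2 : (-((d : ℤ) + 1)) ∉ Finset.Icc (-(d : ℤ)) (d : ℤ) := by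
      simp only [Finset.mem_Icc]
      omega
    rw [show (((d+1:ℕ)) : ℤ) = (d : ℤ) + 1 by push_cast; ring,
      Icc_succ_decomp, Finset.sum_insert hc1, Finset.sum_insert hc2,
      Complex.add_im, Complex.add_im, Finset.sum_range_succ, ih]
    have e1 : ((((-((d : ℤ) + 1)) : ℤ) : ℝ) * θ) = -(((((d : ℤ) + 1) : ℤ) : ℝ) * θ) := by
      push_cast; ring
    rw [e1, term_im]
    rw [show ((-((((((d : ℤ) + 1) : ℤ) : ℝ)) * θ) : ℝ) : ℂ)
        = (((-(((((d : ℤ) + 1) : ℤ) : ℝ)) * θ : ℝ)) : ℂ) by push_cast; ring]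
    rw [show ((-(((((d : ℤ) + 1) : ℤ) : ℝ)) * θ : ℝ)) = -((((((d : ℤ) + 1) : ℤ) : ℝ)) * θ) by ring,
      term_im, Real.sin_neg, Real.cos_neg, if_neg (Nat.succ_ne_zero d)]
    push_cast
    simp only [hsym]
    ring

lemma abs_im_sum (c : ℤ →₀ ℂ) (d : ℕ) :
    ∑ k ∈ Finset.range (d + 1),
        |if k = 0 then (c 0).im else (c (k : ℤ)).im + (c (-(k : ℤ))).im|
      ≤ ∑ m ∈ Finset.Icc (-(d : ℤ)) d, |(c m).im| := by
  induction d with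
  | zero => norm_num [Finset.Icc_self]
  | succ d ih =>
    have hc1 : ((d : ℤ) + 1) ∉ insert (-((d : ℤ) + 1)) (Finset.Icc (-(d : ℤ)) (d : ℤ)) := by
      simp only [Finset.mem_insert, Finset.mem_Icc]
      omega
    have hc2 : (-((d : ℤ) + 1)) ∉ Finset.Icc (-(d : ℤ)) (d : ℤ) := by
      simp only [Finset.mem_Icc]
      omega
    rw [show (((d+1:ℕ)) : ℤ) = (d : ℤ) + 1 by push_cast; ring,
      Icc_succ_decomp, Finset.sum_insert hc1, Finset.sum_insert hc2, Finset.sum_range_succ]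
    have hne : ¬(d + 1 = 0) := Nat.succ_ne_zero d
    simp only [hne, if_false]
    have habs : |(c ((d : ℤ) + 1)).im + (c (-((d : ℤ) + 1))).im|
        ≤ |(c ((d : ℤ) + 1)).im| + |(c (-((d : ℤ) + 1))).im| := abs_add_le _ _
    have : ((d + 1 : ℕ) : ℤ) = (d : ℤ) + 1 := by push_cast; ring
    rw [this]
    linarith

end QSPProof

/-- `g(·,Ψ)` agrees on `[-1,1]` with a real polynomial of degree at most `d`,
written as a Chebyshev combination `∑_{k=0}^d a_k T_k`, and the Chebyshev coefficients satisfy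
`∑_{k=0}^d |a_k| ≤ sinh(∑_{j=0}^d |ψ_j|)`. -/
theorem qsp_coeff_one_norm_bound (d : ℕ) (Ψ : ℕ → ℝ) :
    ∃ a : ℕ → ℝ,
      (∀ x ∈ Set.Icc (-1 : ℝ) 1,
        gfun x d Ψ =
          ∑ k ∈ Finset.range (d + 1), a k * (Polynomial.Chebyshev.T ℝ (k : ℤ)).eval x) ∧
      ∑ k ∈ Finset.range (d + 1), |a k| ≤
        Real.sinh (∑ j ∈ Finset.range (d + 1), |Ψ j|) := by
  classical
  set c := QSPProof.csum Ψ d with hc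
  have hsupp : c.support ⊆ Finset.Icc (-(d : ℤ)) d := QSPProof.csum_support Ψ d
  have hsym : ∀ m : ℤ, c (-m) = c m := QSPProof.csum_symm Ψ d
  refine ⟨fun k => if k = 0 then (c 0).im else (c (k : ℤ)).im + (c (-(k : ℤ))).im, ?_, ?_⟩
  · intro x hx
    obtain ⟨hx1, hx2⟩ := hx
    have hEv : QSPProof.Ev c (Real.arccos x) = Umat x d Ψ 0 0 :=
      QSPProof.Ev_csum Ψ hx1 hx2 d
    have h1 : gfun x d Ψ = (QSPProof.Ev c (Real.arccos x)).im := by rw [hEv]; rfl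
    rw [h1, QSPProof.Ev_sum_of_subset hsupp, QSPProof.im_sum c hsym (Real.arccos x) d]
    refine Finset.sum_congr rfl fun k _ => ?_
    congr 1
    have hT := Polynomial.Chebyshev.T_real_cos (Real.arccos x) (k : ℤ)
    rw [Real.cos_arccos hx1 hx2] at hT
    rw [hT]
    norm_num
  · have h1 := QSPProof.abs_im_sum c d
    have h2 : ∑ m ∈ Finset.Icc (-(d : ℤ)) d, |(c m).im| = QSPProof.nIm c :=
      (QSPProof.nIm_eq_sum hsupp).symm
    have h3 := QSPProof.nIm_csum_le Ψ d
    rw [← hc] at h3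
    calc ∑ k ∈ Finset.range (d + 1),
          |if k = 0 then (c 0).im else (c (k : ℤ)).im + (c (-(k : ℤ))).im|
        ≤ ∑ m ∈ Finset.Icc (-(d : ℤ)) d, |(c m).im| := h1
      _ = QSPProof.nIm c := h2
      _ ≤ Real.sinh (∑ j ∈ Finset.range (d + 1), |Ψ j|) := h3
end
end

section
/- For every d ∈ ℕ, every Ψ = (ψ₀,…,ψ_d) ∈ ℝ^{d+1}, and all indices r, s ∈ {0,…,d}, the function x ↦ ∂²g(x,Ψ)/∂ψ_r∂ψ_s (the second partial derivative of Ψ ↦ g(x,Ψ) in the variables ψ_r and ψ_s) agrees on [−1,1] with a real polynomial of degree at most d, and writing it as Σ_{k=0}^{d} b_k·T_k(x) for its Chebyshev expansion, one has Σ_{k=0}^{d} |b_k| ≤ sinh(Σ_{j=0}^{d} |ψ_j|). -/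
open scoped Real
noncomputable section

namespace QSPAux

def sfac (k : ℕ) (ψ : ℝ) : ℝ := Real.sin (ψ + k * (π / 2))
def cfac (k : ℕ) (ψ : ℝ) : ℝ := Real.cos (ψ + k * (π / 2))

lemma sfac_zero (ψ : ℝ) : sfac 0 ψ = Real.sin ψ := by simp [sfac]
lemma cfac_zero (ψ : ℝ) : cfac 0 ψ = Real.cos ψ := by simp [cfac]
lemma sfac_one (ψ : ℝ) : sfac 1 ψ = Real.cos ψ := by
  simp [sfac, Real.sin_add_pi_div_two]
lemma cfac_one (ψ : ℝ) : cfac 1 ψ = -Real.sin ψ := by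
  simp [cfac, Real.cos_add_pi_div_two]
lemma sfac_two (ψ : ℝ) : sfac 2 ψ = -Real.sin ψ := by
  have : ψ + (2:ℕ) * (π / 2) = ψ + π := by push_cast; ring
  rw [sfac, this, Real.sin_add_pi]
lemma cfac_two (ψ : ℝ) : cfac 2 ψ = -Real.cos ψ := by
  have : ψ + (2:ℕ) * (π / 2) = ψ + π := by push_cast; ring
  rw [cfac, this, Real.cos_add_pi]

lemma hasDerivAt_sfac (k : ℕ) (t : ℝ) : HasDerivAt (sfac k) (sfac (k + 1) t) t := by
  have h : HasDerivAt (fun x : ℝ => Real.sin (x + k * (π / 2)))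
      (Real.cos (t + k * (π / 2))) t := by
    simpa using (((hasDerivAt_id t).add_const ((k : ℝ) * (π / 2))).sin)
  have : Real.cos (t + k * (π / 2)) = sfac (k + 1) t := by
    rw [sfac, ← Real.sin_add_pi_div_two]
    push_cast; ring_nf
  rw [← this]; exact h
lemma hasDerivAt_cfac (k : ℕ) (t : ℝ) : HasDerivAt (cfac k) (cfac (k + 1) t) t := by
  have h : HasDerivAt (fun x : ℝ => Real.cos (x + k * (π / 2)))
      (-Real.sin (t + k * (π / 2))) t := by
    simpa using (((hasDerivAt_id t).add_const ((k : ℝ) * (π / 2))).cos)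
  have : -Real.sin (t + k * (π / 2)) = cfac (k + 1) t := by
    rw [cfac, ← Real.cos_add_pi_div_two]
    push_cast; ring_nf
  rw [← this]; exact h

lemma abs_sfac_le_one (k : ℕ) (ψ : ℝ) : |sfac k ψ| ≤ 1 :=
  abs_le.2 ⟨Real.neg_one_le_sin _, Real.sin_le_one _⟩
lemma abs_cfac_le_one (k : ℕ) (ψ : ℝ) : |cfac k ψ| ≤ 1 :=
  abs_le.2 ⟨Real.neg_one_le_cos _, Real.cos_le_one _⟩


def Zm : Matrix (Fin 2) (Fin 2) ℂ := !![1, 0; 0, -1]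

def Vm (θ : ℝ) (m : ℤ) : Matrix (Fin 2) (Fin 2) ℂ :=
  !![(Real.cos (m * θ) : ℂ), Complex.I * (Real.sin (m * θ) : ℂ);
     Complex.I * (Real.sin (m * θ) : ℂ), (Real.cos (m * θ) : ℂ)]

lemma expZ_eq (ψ : ℝ) :
    expZ ψ = (Real.cos ψ : ℂ) • (1 : Matrix (Fin 2) (Fin 2) ℂ)
      + (Complex.I * (Real.sin ψ : ℂ)) • Zm := by
  rw [expZ, Zm, Matrix.one_fin_two]
  ext i j
  fin_cases i <;> fin_cases j <;>
    simp [mul_comm Complex.I, ← neg_mul, Complex.exp_mul_I, Complex.cos_neg, Complex.sin_neg,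
      Complex.ofReal_cos, Complex.ofReal_sin] <;> ring
lemma Vm_one (θ : ℝ) (hθ : 0 ≤ Real.sin θ) : Vm θ 1 = Wmat (Real.cos θ) := by
  have h1 : Real.sqrt (1 - Real.cos θ ^ 2) = Real.sin θ := by
    rw [show (1 : ℝ) - Real.cos θ ^ 2 = Real.sin θ ^ 2 by
      have := Real.sin_sq_add_cos_sq θ; linarith]
    exact Real.sqrt_sq hθ
  rw [Vm, Wmat, h1]
  norm_num

lemma Vm_mul (θ : ℝ) (m m' : ℤ) : Vm θ m * Vm θ m' = Vm θ (m + m') := by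
  rw [Vm, Vm, Vm, Matrix.mul_fin_two]
  have hc : Real.cos ((↑(m + m') : ℝ) * θ) = Real.cos ((m:ℝ) * θ + (m':ℝ) * θ) := by
    push_cast; ring_nf
  have hs : Real.sin ((↑(m + m') : ℝ) * θ) = Real.sin ((m:ℝ) * θ + (m':ℝ) * θ) := by
    push_cast; ring_nf
  rw [hc, hs, Real.cos_add, Real.sin_add]
  congr 1 <;> push_cast <;> ring_nf <;>
    simp [Complex.ext_iff] <;> ring_nf <;> simp

lemma Zm_mul_Vm (θ : ℝ) (m : ℤ) : Zm * Vm θ m = Vm θ (-m) * Zm := by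
  rw [Zm, Vm, Vm, Matrix.mul_fin_two, Matrix.mul_fin_two]
  have hc : Real.cos ((↑(-m) : ℝ) * θ) = Real.cos ((m:ℝ) * θ) := by
    push_cast; rw [neg_mul, Real.cos_neg]
  have hs : Real.sin ((↑(-m) : ℝ) * θ) = -Real.sin ((m:ℝ) * θ) := by
    push_cast; rw [neg_mul, Real.sin_neg]
  rw [hc, hs]
  norm_num

lemma Zm00 : Zm 0 0 = 1 := by simp [Zm]
lemma Zm01 : Zm 0 1 = 0 := by simp [Zm]
lemma Zm10 : Zm 1 0 = 0 := by simp [Zm]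
lemma Zm11 : Zm 1 1 = -1 := by simp [Zm]

lemma Zm_pow_mul_Vm (k : ℕ) (θ : ℝ) (m : ℤ) :
    Zm ^ k * Vm θ m = Vm θ ((-1) ^ k * m) * Zm ^ k := by
  induction k generalizing m with
  | zero => simp
  | succ n ih =>
    rw [pow_succ, mul_assoc, Zm_mul_Vm, ← mul_assoc, ih, mul_assoc]
    congr 2
    ring

lemma Zm_pow_apply (k : ℕ) : (Zm ^ k) 0 0 = 1 ∧ (Zm ^ k) 0 1 = 0 ∧ (Zm ^ k) 1 0 = 0 := by
  induction k with
  | zero => simp [Matrix.one_apply]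
  | succ n ih =>
    obtain ⟨h1, h2, h3⟩ := ih
    rw [pow_succ]
    refine ⟨?_, ?_, ?_⟩ <;>
      rw [Matrix.mul_apply, Fin.sum_univ_two] <;>
      simp only [h1, h2, h3, Zm00, Zm01, Zm10, Zm11] <;> ring

lemma Vm_mul_Zm_pow_apply (θ : ℝ) (m : ℤ) (k : ℕ) :
    (Vm θ m * Zm ^ k) 0 0 = (Real.cos ((m:ℝ) * θ) : ℂ) := by
  rw [Matrix.mul_apply, Fin.sum_univ_two, (Zm_pow_apply k).1, (Zm_pow_apply k).2.2, Vm]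
  simp
def gap (S : Finset ℕ) (j : ℕ) : ℤ := (-1) ^ ((S ∩ Finset.range (j + 1)).card)

def mexp (d : ℕ) (S : Finset ℕ) : ℤ := ∑ j ∈ Finset.range d, gap S j

def coeffC (d : ℕ) (Ψ : ℕ → ℝ) (S : Finset ℕ) : ℂ :=
  ∏ j ∈ Finset.range (d + 1),
    (if j ∈ S then Complex.I * (Real.sin (Ψ j) : ℂ) else (Real.cos (Ψ j) : ℂ))

lemma Vm_zero (θ : ℝ) : Vm θ 0 = 1 := by
  rw [Vm, Matrix.one_fin_two]
  norm_num

lemma coeffC_succ_notmem (n : ℕ) (Ψ : ℕ → ℝ) (S : Finset ℕ) (h : n + 1 ∉ S) :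
    coeffC (n + 1) Ψ S = coeffC n Ψ S * (Real.cos (Ψ (n + 1)) : ℂ) := by
  rw [coeffC, coeffC, Finset.prod_range_succ, if_neg h]

lemma coeffC_succ_insert (n : ℕ) (Ψ : ℕ → ℝ) (S : Finset ℕ) (h : n + 1 ∉ S) :
    coeffC (n + 1) Ψ (insert (n + 1) S) =
      coeffC n Ψ S * (Complex.I * (Real.sin (Ψ (n + 1)) : ℂ)) := by
  rw [coeffC, Finset.prod_range_succ, if_pos (Finset.mem_insert_self _ _), coeffC]
  congr 1
  apply Finset.prod_congr rfl
  intro j hj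
  have hne : j ≠ n + 1 := by
    intro hEq; rw [hEq] at hj; exact absurd (Finset.mem_range.mp hj) (lt_irrefl _)
  simp [Finset.mem_insert, hne]

lemma gap_of_subset {n : ℕ} {S : Finset ℕ} (hsub : S ⊆ Finset.range (n + 1)) :
    gap S n = (-1) ^ S.card := by
  rw [gap, Finset.inter_eq_left.mpr hsub]

lemma mexp_succ (n : ℕ) (S : Finset ℕ) (hsub : S ⊆ Finset.range (n + 1)) :
    mexp (n + 1) S = mexp n S + (-1) ^ S.card := by
  rw [mexp, Finset.sum_range_succ, ← mexp, gap_of_subset hsub]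

lemma mexp_insert (n : ℕ) (S : Finset ℕ) (hsub : S ⊆ Finset.range (n + 1)) :
    mexp (n + 1) (insert (n + 1) S) = mexp n S + (-1) ^ S.card := by
  have h : ∀ j ∈ Finset.range (n + 1), gap (insert (n + 1) S) j = gap S j := by
    intro j hj
    have : n + 1 ∉ Finset.range (j + 1) := by
      rw [Finset.mem_range] at hj ⊢
      omega
    rw [gap, gap, Finset.insert_inter_of_notMem this]
  rw [mexp, Finset.sum_congr rfl h, ← mexp, mexp_succ n S hsub]

lemma abs_mexp_le (d : ℕ) (S : Finset ℕ) : (mexp d S).natAbs ≤ d := by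
  have h : |mexp d S| ≤ (d : ℤ) := by
    calc |mexp d S| ≤ ∑ j ∈ Finset.range d, |gap S j| := Finset.abs_sum_le_sum_abs _ _
    _ = ∑ j ∈ Finset.range d, 1 := by
        apply Finset.sum_congr rfl; intro j _; rw [gap, abs_pow, abs_neg, abs_one, one_pow]
    _ = (d : ℤ) := by simp
  rw [Int.abs_eq_natAbs] at h
  omega

lemma umat_expand (d : ℕ) (Ψ : ℕ → ℝ) (θ : ℝ) (hθ : 0 ≤ Real.sin θ) :
    Umat (Real.cos θ) d Ψ =
      ∑ S ∈ (Finset.range (d + 1)).powerset,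
        coeffC d Ψ S • (Vm θ (mexp d S) * Zm ^ S.card) := by
  induction d with
  | zero =>
    rw [Umat]
    simp only [List.range_zero, List.map_nil, List.prod_nil, mul_one]
    rw [show Finset.range 1 = insert 0 (∅ : Finset ℕ) from rfl,
      Finset.sum_powerset_insert (by simp), Finset.powerset_empty,
      Finset.sum_singleton, Finset.sum_singleton]
    have h1 : coeffC 0 Ψ ∅ = (Real.cos (Ψ 0) : ℂ) := by
      rw [coeffC, Finset.prod_range_one]; simp
    have h2 : coeffC 0 Ψ (insert 0 ∅) = Complex.I * (Real.sin (Ψ 0) : ℂ) := by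
      rw [coeffC, Finset.prod_range_one]; simp
    have h3 : mexp 0 (∅ : Finset ℕ) = 0 := by simp [mexp]
    have h4 : mexp 0 (insert 0 (∅ : Finset ℕ)) = 0 := by simp [mexp]
    rw [h1, h2, h3, h4, Vm_zero, expZ_eq]
    simp
  | succ n ih =>
    have hUr : Umat (Real.cos θ) (n + 1) Ψ =
        Umat (Real.cos θ) n Ψ * (Wmat (Real.cos θ) * expZ (Ψ (n + 1))) := by
      rw [Umat, Umat, List.range_succ, List.map_append, List.prod_append, ← mul_assoc]
      simp
    have hfac : Wmat (Real.cos θ) * expZ (Ψ (n + 1)) =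
        (Real.cos (Ψ (n + 1)) : ℂ) • Vm θ 1
          + (Complex.I * (Real.sin (Ψ (n + 1)) : ℂ)) • (Vm θ 1 * Zm) := by
      rw [expZ_eq, mul_add, mul_smul_comm, mul_smul_comm, mul_one, Vm_one θ hθ]
    rw [hUr, ih, Finset.sum_mul,
      show Finset.range (n + 1 + 1) = insert (n + 1) (Finset.range (n + 1)) from
        Finset.range_add_one,
      Finset.sum_powerset_insert (by simp), ← Finset.sum_add_distrib]
    apply Finset.sum_congr rfl
    intro S hS
    have hsub : S ⊆ Finset.range (n + 1) := Finset.mem_powerset.mp hS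
    have hnot : n + 1 ∉ S := fun h => by
      have := hsub h; rw [Finset.mem_range] at this; omega
    have key : Vm θ (mexp n S) * Zm ^ S.card * Vm θ 1 =
        Vm θ (mexp n S + (-1) ^ S.card) * Zm ^ S.card := by
      rw [mul_assoc, Zm_pow_mul_Vm, ← mul_assoc, Vm_mul, mul_one]
    rw [hfac, mul_add, mul_smul_comm, mul_smul_comm, smul_mul_assoc, smul_mul_assoc,
      key, ← mul_assoc, key, smul_smul, smul_smul,
      coeffC_succ_notmem n Ψ S hnot, coeffC_succ_insert n Ψ S hnot,
      mexp_succ n S hsub, mexp_insert n S hsub,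
      Finset.card_insert_of_notMem hnot, mul_assoc (Vm θ _), ← pow_succ]
    congr 2
    · ring
    · ring
def rcg (d : ℕ) (o : ℕ → ℕ) (S : Finset ℕ) (Ψ : ℕ → ℝ) : ℝ :=
  ∏ j ∈ Finset.range (d + 1), (if j ∈ S then sfac (o j) (Ψ j) else cfac (o j) (Ψ j))

def eSgn (S : Finset ℕ) : ℝ := (Complex.I ^ S.card).im

lemma im_mul_ofReal (z : ℂ) (a : ℝ) : (z * (a : ℂ)).im = z.im * a := by
  simp [Complex.mul_im]

lemma coeffC_eq (d : ℕ) (Ψ : ℕ → ℝ) (S : Finset ℕ) (hsub : S ⊆ Finset.range (d + 1)) :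
    coeffC d Ψ S = Complex.I ^ S.card * ((rcg d (fun _ => 0) S Ψ : ℝ) : ℂ) := by
  rw [coeffC]
  have hpt : ∀ j, (if j ∈ S then Complex.I * (Real.sin (Ψ j) : ℂ) else (Real.cos (Ψ j) : ℂ))
      = (if j ∈ S then Complex.I else 1) *
        (if j ∈ S then (Real.sin (Ψ j) : ℂ) else (Real.cos (Ψ j) : ℂ)) := by
    intro j; by_cases h : j ∈ S <;> simp [h]
  rw [Finset.prod_congr rfl fun j _ => hpt j, Finset.prod_mul_distrib]
  congr 1
  · rw [Finset.prod_ite_mem, Finset.inter_eq_right.mpr hsub, Finset.prod_const]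
  · rw [rcg, Complex.ofReal_prod]
    apply Finset.prod_congr rfl
    intro j _
    by_cases h : j ∈ S <;> simp [h, sfac_zero, cfac_zero]

lemma gfun_eq (θ : ℝ) (hθ : 0 ≤ Real.sin θ) (d : ℕ) (Ψ : ℕ → ℝ) :
    gfun (Real.cos θ) d Ψ =
      ∑ S ∈ (Finset.range (d + 1)).powerset,
        eSgn S * rcg d (fun _ => 0) S Ψ * Real.cos ((mexp d S : ℝ) * θ) := by
  rw [gfun, umat_expand d Ψ θ hθ]
  rw [show ((∑ S ∈ (Finset.range (d + 1)).powerset,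
      coeffC d Ψ S • (Vm θ (mexp d S) * Zm ^ S.card)) 0 0) =
      ∑ S ∈ (Finset.range (d + 1)).powerset,
        (coeffC d Ψ S • (Vm θ (mexp d S) * Zm ^ S.card)) 0 0 by
    rw [Matrix.sum_apply]]
  rw [Complex.im_sum]
  apply Finset.sum_congr rfl
  intro S hS
  have hsub : S ⊆ Finset.range (d + 1) := Finset.mem_powerset.mp hS
  rw [Matrix.smul_apply, Vm_mul_Zm_pow_apply, smul_eq_mul, coeffC_eq d Ψ S hsub,
    mul_assoc, ← Complex.ofReal_mul, im_mul_ofReal, eSgn, mul_assoc]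

lemma rcg_hasDerivAt (d : ℕ) (o : ℕ → ℕ) (S : Finset ℕ) (s : ℕ) (hs : s < d + 1)
    (Ψ : ℕ → ℝ) :
    HasDerivAt (fun t => rcg d o S (Function.update Ψ s t))
      (rcg d (Function.update o s (o s + 1)) S Ψ) (Ψ s) := by
  set C : ℝ := ∏ j ∈ (Finset.range (d + 1)).erase s,
    (if j ∈ S then sfac (o j) (Ψ j) else cfac (o j) (Ψ j)) with hCdef
  have hfun : (fun t => rcg d o S (Function.update Ψ s t))
      = fun t => (if s ∈ S then sfac (o s) t else cfac (o s) t) * C := by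
    funext t
    rw [rcg, ← Finset.mul_prod_erase _ _ (Finset.mem_range.mpr hs)]
    congr 1
    · rw [Function.update_self]
    · apply Finset.prod_congr rfl
      intro j hj
      rw [Function.update_of_ne (Finset.ne_of_mem_erase hj)]
  have hval : rcg d (Function.update o s (o s + 1)) S Ψ
      = (if s ∈ S then sfac (o s + 1) (Ψ s) else cfac (o s + 1) (Ψ s)) * C := by
    rw [rcg, ← Finset.mul_prod_erase _ _ (Finset.mem_range.mpr hs), Function.update_self]
    congr 1
    apply Finset.prod_congr rfl
    intro j hj
    rw [Function.update_of_ne (Finset.ne_of_mem_erase hj)]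
  rw [hfun, hval]
  by_cases hm : s ∈ S
  · simp only [if_pos hm]
    exact (hasDerivAt_sfac (o s) (Ψ s)).mul_const C
  · simp only [if_neg hm]
    exact (hasDerivAt_cfac (o s) (Ψ s)).mul_const C

def o1 (s : ℕ) : ℕ → ℕ := fun j => if j = s then 1 else 0
def o2 (r s : ℕ) : ℕ → ℕ := fun j => (if j = r then 1 else 0) + (if j = s then 1 else 0)

lemma update_zero_eq_o1 (s : ℕ) :
    Function.update (fun _ : ℕ => 0) s ((fun _ : ℕ => 0) s + 1) = o1 s := by
  funext j
  rcases eq_or_ne j s with h | h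
  · subst h; rw [Function.update_self, o1]; simp
  · rw [Function.update_of_ne h, o1]; simp [h]

lemma update_o1_eq_o2 (r s : ℕ) :
    Function.update (o1 s) r (o1 s r + 1) = o2 r s := by
  funext j
  rcases eq_or_ne j r with h | h
  · subst h; rw [Function.update_self, o1, o2]; simp [add_comm]
  · rw [Function.update_of_ne h, o1, o2]; simp [h]

lemma gfunPD_eq (θ : ℝ) (hθ : 0 ≤ Real.sin θ) (d s : ℕ) (hs : s ≤ d) (Ψ : ℕ → ℝ) :
    gfunPD (Real.cos θ) d s Ψ =
      ∑ S ∈ (Finset.range (d + 1)).powerset,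
        eSgn S * rcg d (o1 s) S Ψ * Real.cos ((mexp d S : ℝ) * θ) := by
  rw [gfunPD]
  have hfun : (fun t => gfun (Real.cos θ) d (Function.update Ψ s t))
      = fun t => ∑ S ∈ (Finset.range (d + 1)).powerset,
        eSgn S * rcg d (fun _ => 0) S (Function.update Ψ s t)
          * Real.cos ((mexp d S : ℝ) * θ) :=
    funext fun t => gfun_eq θ hθ d _
  rw [hfun]
  have H : HasDerivAt (fun t => ∑ S ∈ (Finset.range (d + 1)).powerset,
      eSgn S * rcg d (fun _ => 0) S (Function.update Ψ s t)
        * Real.cos ((mexp d S : ℝ) * θ))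
      (∑ S ∈ (Finset.range (d + 1)).powerset,
        eSgn S * rcg d (o1 s) S Ψ * Real.cos ((mexp d S : ℝ) * θ)) (Ψ s) := by
    apply HasDerivAt.fun_sum
    intro S hS
    have h := rcg_hasDerivAt d (fun _ => 0) S s (Nat.lt_succ_of_le hs) Ψ
    rw [update_zero_eq_o1] at h
    exact (h.const_mul (eSgn S)).mul_const _
  exact H.deriv

lemma gfunPD2_eq (θ : ℝ) (hθ : 0 ≤ Real.sin θ) (d r s : ℕ) (hr : r ≤ d) (hs : s ≤ d)
    (Ψ : ℕ → ℝ) :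
    gfunPD2 (Real.cos θ) d r s Ψ =
      ∑ S ∈ (Finset.range (d + 1)).powerset,
        eSgn S * rcg d (o2 r s) S Ψ * Real.cos ((mexp d S : ℝ) * θ) := by
  rw [gfunPD2]
  have hfun : (fun t => gfunPD (Real.cos θ) d s (Function.update Ψ r t))
      = fun t => ∑ S ∈ (Finset.range (d + 1)).powerset,
        eSgn S * rcg d (o1 s) S (Function.update Ψ r t)
          * Real.cos ((mexp d S : ℝ) * θ) :=
    funext fun t => gfunPD_eq θ hθ d s hs _
  rw [hfun]
  have H : HasDerivAt (fun t => ∑ S ∈ (Finset.range (d + 1)).powerset,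
      eSgn S * rcg d (o1 s) S (Function.update Ψ r t)
        * Real.cos ((mexp d S : ℝ) * θ))
      (∑ S ∈ (Finset.range (d + 1)).powerset,
        eSgn S * rcg d (o2 r s) S Ψ * Real.cos ((mexp d S : ℝ) * θ)) (Ψ r) := by
    apply HasDerivAt.fun_sum
    intro S hS
    have h := rcg_hasDerivAt d (o1 s) S r (Nat.lt_succ_of_le hr) Ψ
    rw [update_o1_eq_o2] at h
    exact (h.const_mul (eSgn S)).mul_const _
  exact H.deriv
def flip1 (a : ℕ) (S : Finset ℕ) : Finset ℕ := if a ∈ S then S.erase a else insert a S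

lemma mem_flip1 {j a : ℕ} {S : Finset ℕ} :
    j ∈ flip1 a S ↔ (if j = a then a ∉ S else j ∈ S) := by
  rw [flip1]
  by_cases h : a ∈ S <;> by_cases hj : j = a <;>
    simp [h, hj, Finset.mem_erase, Finset.mem_insert]

lemma flip1_subset {a : ℕ} {S A : Finset ℕ} (ha : a ∈ A) (h : S ⊆ A) : flip1 a S ⊆ A := by
  rw [flip1]
  split_ifs
  · exact (Finset.erase_subset a S).trans h
  · exact Finset.insert_subset ha h

lemma flip1_flip1 (a : ℕ) (S : Finset ℕ) : flip1 a (flip1 a S) = S := by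
  by_cases h : a ∈ S
  · have h1 : flip1 a S = S.erase a := by rw [flip1, if_pos h]
    rw [h1, flip1, if_neg (Finset.notMem_erase a S), Finset.insert_erase h]
  · have h1 : flip1 a S = insert a S := by rw [flip1, if_neg h]
    rw [h1, flip1, if_pos (Finset.mem_insert_self a S), Finset.erase_insert h]

lemma odd_card_flip1 (a : ℕ) (S : Finset ℕ) : Odd (flip1 a S).card ↔ ¬Odd S.card := by
  rw [flip1]
  split_ifs with h
  · have h1 : 1 ≤ S.card := Finset.card_pos.mpr ⟨a, h⟩
    rw [Finset.card_erase_of_mem h, Nat.odd_iff, Nat.odd_iff]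
    omega
  · rw [Finset.card_insert_of_notMem h, Nat.odd_iff, Nat.odd_iff]
    omega

def Tset (r s : ℕ) (S : Finset ℕ) : Finset ℕ := if r = s then S else flip1 s (flip1 r S)

def Tset' (r s : ℕ) (T : Finset ℕ) : Finset ℕ := if r = s then T else flip1 r (flip1 s T)

lemma Tset'_Tset (r s : ℕ) (S : Finset ℕ) : Tset' r s (Tset r s S) = S := by
  rw [Tset, Tset']
  split_ifs
  · rfl
  · rw [flip1_flip1, flip1_flip1]

lemma Tset_Tset' (r s : ℕ) (S : Finset ℕ) : Tset r s (Tset' r s S) = S := by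
  rw [Tset, Tset']
  split_ifs
  · rfl
  · rw [flip1_flip1, flip1_flip1]

lemma odd_card_Tset (r s : ℕ) (S : Finset ℕ) :
    Odd (Tset r s S).card ↔ Odd S.card := by
  rw [Tset]
  split_ifs
  · rfl
  · rw [odd_card_flip1, odd_card_flip1]; tauto

lemma Tset_subset {r s : ℕ} {S A : Finset ℕ} (hr : r ∈ A) (hs : s ∈ A) (h : S ⊆ A) :
    Tset r s S ⊆ A := by
  rw [Tset]
  split_ifs
  · exact h
  · exact flip1_subset hs (flip1_subset hr h)

lemma Tset'_subset {r s : ℕ} {S A : Finset ℕ} (hr : r ∈ A) (hs : s ∈ A) (h : S ⊆ A) :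
    Tset' r s S ⊆ A := by
  rw [Tset']
  split_ifs
  · exact h
  · exact flip1_subset hr (flip1_subset hs h)

lemma factor_bound (r s j : ℕ) (S : Finset ℕ) (Ψ : ℕ → ℝ) :
    |if j ∈ S then sfac (o2 r s j) (Ψ j) else cfac (o2 r s j) (Ψ j)|
      ≤ if j ∈ Tset r s S then |Ψ j| else 1 := by
  by_cases hrs : r = s
  · subst hrs
    rw [Tset, if_pos rfl]
    by_cases hjr : j = r
    · subst hjr
      have ho : o2 j j j = 2 := by simp [o2]
      rw [ho]
      by_cases hjS : j ∈ S
      · rw [if_pos hjS, if_pos hjS, sfac_two, abs_neg]; exact Real.abs_sin_le_abs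
      · rw [if_neg hjS, if_neg hjS, cfac_two, abs_neg]; exact Real.abs_cos_le_one _
    · have ho : o2 r r j = 0 := by simp [o2, hjr]
      rw [ho]
      by_cases hjS : j ∈ S
      · rw [if_pos hjS, if_pos hjS, sfac_zero]; exact Real.abs_sin_le_abs
      · rw [if_neg hjS, if_neg hjS, cfac_zero]; exact Real.abs_cos_le_one _
  · by_cases hjr : j = r
    · subst hjr
      have hjs : ¬ (j = s) := hrs
      have ho : o2 j s j = 1 := by simp [o2, hjs]
      rw [ho]
      have hmem2 : j ∈ Tset j s S ↔ j ∉ S := by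
        rw [Tset, if_neg hrs, mem_flip1, if_neg hjs, mem_flip1, if_pos rfl]
      by_cases hjS : j ∈ S
      · rw [if_pos hjS, if_neg (fun h => (hmem2.mp h) hjS), sfac_one]
        exact Real.abs_cos_le_one _
      · rw [if_neg hjS, if_pos (hmem2.mpr hjS), cfac_one, abs_neg]
        exact Real.abs_sin_le_abs
    · by_cases hjs : j = s
      · subst hjs
        have ho : o2 r j j = 1 := by simp [o2, hjr]
        rw [ho]
        have hmem2 : j ∈ Tset r j S ↔ j ∉ S := by
          rw [Tset, if_neg hrs, mem_flip1, if_pos rfl, mem_flip1, if_neg hjr]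
        by_cases hjS : j ∈ S
        · rw [if_pos hjS, if_neg (fun h => (hmem2.mp h) hjS), sfac_one]
          exact Real.abs_cos_le_one _
        · rw [if_neg hjS, if_pos (hmem2.mpr hjS), cfac_one, abs_neg]
          exact Real.abs_sin_le_abs
      · have ho : o2 r s j = 0 := by simp [o2, hjr, hjs]
        rw [ho]
        have hmem2 : j ∈ Tset r s S ↔ j ∈ S := by
          rw [Tset, if_neg hrs, mem_flip1, if_neg hjs, mem_flip1, if_neg hjr]
        by_cases hjS : j ∈ S
        · rw [if_pos hjS, if_pos (hmem2.mpr hjS), sfac_zero]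
          exact Real.abs_sin_le_abs
        · rw [if_neg hjS, if_neg (fun h => hjS (hmem2.mp h)), cfac_zero]
          exact Real.abs_cos_le_one _

lemma abs_rcg_le (d r s : ℕ) (hr : r < d + 1) (hs : s < d + 1) (S : Finset ℕ)
    (hsub : S ⊆ Finset.range (d + 1)) (Ψ : ℕ → ℝ) :
    |rcg d (o2 r s) S Ψ| ≤ ∏ j ∈ Tset r s S, |Ψ j| := by
  have hTsub : Tset r s S ⊆ Finset.range (d + 1) :=
    Tset_subset (Finset.mem_range.mpr hr) (Finset.mem_range.mpr hs) hsub
  rw [rcg, Finset.abs_prod]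
  calc ∏ j ∈ Finset.range (d + 1),
        |if j ∈ S then sfac (o2 r s j) (Ψ j) else cfac (o2 r s j) (Ψ j)|
      ≤ ∏ j ∈ Finset.range (d + 1), (if j ∈ Tset r s S then |Ψ j| else 1) := by
        apply Finset.prod_le_prod
        · intro j _; exact abs_nonneg _
        · intro j _; exact factor_bound r s j S Ψ
    _ = ∏ j ∈ Finset.range (d + 1) ∩ Tset r s S, |Ψ j| := Finset.prod_ite_mem _ _ _
    _ = ∏ j ∈ Tset r s S, |Ψ j| := by rw [Finset.inter_eq_right.mpr hTsub]

lemma abs_eSgn_le (S : Finset ℕ) : |eSgn S| ≤ 1 := by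
  rw [eSgn]
  calc |(Complex.I ^ S.card).im| ≤ ‖Complex.I ^ S.card‖ :=
        Complex.abs_im_le_norm _
    _ = 1 := by rw [norm_pow, Complex.norm_I, one_pow]

lemma eSgn_eq_zero {S : Finset ℕ} (h : ¬Odd S.card) : eSgn S = 0 := by
  rw [Nat.not_odd_iff_even] at h
  obtain ⟨m, hm⟩ := h
  rw [eSgn, hm, ← two_mul, pow_mul, Complex.I_sq]
  rcases Nat.even_or_odd m with he | ho
  · rw [he.neg_one_pow]; simp
  · rw [ho.neg_one_pow]; simp

lemma sum_odd_even_le (A : Finset ℕ) (a : ℕ → ℝ) (ha : ∀ j, 0 ≤ a j) :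
    (∑ T ∈ A.powerset, if Odd T.card then ∏ j ∈ T, a j else 0)
        ≤ Real.sinh (∑ j ∈ A, a j) ∧
      (∑ T ∈ A.powerset, if Odd T.card then 0 else ∏ j ∈ T, a j)
        ≤ Real.cosh (∑ j ∈ A, a j) := by
  classical
  induction A using Finset.induction_on with
  | empty => simp
  | @insert c A' hnot ih =>
    obtain ⟨ih1, ih2⟩ := ih
    have hsum0 : 0 ≤ ∑ j ∈ A', a j := Finset.sum_nonneg fun j _ => ha j
    have hsinh0 : 0 ≤ Real.sinh (∑ j ∈ A', a j) := by
      rw [← Real.sinh_zero]; exact Real.sinh_le_sinh.mpr hsum0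
    have hcosh0 : 0 ≤ Real.cosh (∑ j ∈ A', a j) := (Real.cosh_pos _).le
    have hins : ∀ T ∈ A'.powerset, c ∉ T := fun T hT hc =>
      hnot (Finset.mem_powerset.mp hT hc)
    have hrw1 : ∀ T ∈ A'.powerset,
        (if Odd (insert c T).card then ∏ j ∈ insert c T, a j else 0)
          = a c * (if Odd T.card then 0 else ∏ j ∈ T, a j) := by
      intro T hT
      have hodd1 : Odd (T.card + 1) ↔ ¬ Odd T.card := by
        rw [Nat.odd_iff, Nat.odd_iff]; omega
      rw [Finset.card_insert_of_notMem (hins T hT), Finset.prod_insert (hins T hT)]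
      by_cases h : Odd T.card
      · simp [hodd1, h]
      · simp [hodd1, h]
    have hrw2 : ∀ T ∈ A'.powerset,
        (if Odd (insert c T).card then 0 else ∏ j ∈ insert c T, a j)
          = a c * (if Odd T.card then ∏ j ∈ T, a j else 0) := by
      intro T hT
      have hodd1 : Odd (T.card + 1) ↔ ¬ Odd T.card := by
        rw [Nat.odd_iff, Nat.odd_iff]; omega
      rw [Finset.card_insert_of_notMem (hins T hT), Finset.prod_insert (hins T hT)]
      by_cases h : Odd T.card
      · simp [hodd1, h]
      · simp [hodd1, h]
    have hle1 : Real.sinh (∑ j ∈ A', a j)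
        ≤ Real.sinh (∑ j ∈ A', a j) * Real.cosh (a c) :=
      le_mul_of_one_le_right hsinh0 (Real.one_le_cosh _)
    have hle2 : a c * Real.cosh (∑ j ∈ A', a j)
        ≤ Real.sinh (a c) * Real.cosh (∑ j ∈ A', a j) :=
      mul_le_mul_of_nonneg_right (Real.self_le_sinh_iff.mpr (ha c)) hcosh0
    have hle3 : Real.cosh (∑ j ∈ A', a j)
        ≤ Real.cosh (∑ j ∈ A', a j) * Real.cosh (a c) :=
      le_mul_of_one_le_right hcosh0 (Real.one_le_cosh _)
    have hle4 : a c * Real.sinh (∑ j ∈ A', a j)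
        ≤ Real.sinh (a c) * Real.sinh (∑ j ∈ A', a j) :=
      mul_le_mul_of_nonneg_right (Real.self_le_sinh_iff.mpr (ha c)) hsinh0
    constructor
    · rw [Finset.sum_powerset_insert hnot, Finset.sum_congr rfl hrw1, ← Finset.mul_sum,
        Finset.sum_insert hnot]
      have hadd : Real.sinh (a c + ∑ j ∈ A', a j)
          = Real.sinh (∑ j ∈ A', a j) * Real.cosh (a c)
            + Real.sinh (a c) * Real.cosh (∑ j ∈ A', a j) := by
        rw [Real.sinh_add]; ring
      have := mul_le_mul_of_nonneg_left ih2 (ha c)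
      rw [hadd]
      linarith
    · rw [Finset.sum_powerset_insert hnot, Finset.sum_congr rfl hrw2, ← Finset.mul_sum,
        Finset.sum_insert hnot]
      have hadd : Real.cosh (a c + ∑ j ∈ A', a j)
          = Real.cosh (∑ j ∈ A', a j) * Real.cosh (a c)
            + Real.sinh (a c) * Real.sinh (∑ j ∈ A', a j) := by
        rw [Real.cosh_add]; ring
      have := mul_le_mul_of_nonneg_left ih1 (ha c)
      rw [hadd]
      linarith

end QSPAux

/-- for `r, s ∈ {0,…,d}`, `x ↦ ∂²g(x,Ψ)/∂ψ_r∂ψ_s` agrees on `[-1,1]` with a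
real polynomial of degree at most `d`, written as `∑_{k=0}^d b_k T_k`, with
`∑_{k=0}^d |b_k| ≤ sinh(∑_{j=0}^d |ψ_j|)`. -/
theorem qsp_hessian_coeff_one_norm_bound (d : ℕ) (Ψ : ℕ → ℝ) (r s : ℕ)
    (hr : r ≤ d) (hs : s ≤ d) :
    ∃ b : ℕ → ℝ,
      (∀ x ∈ Set.Icc (-1 : ℝ) 1,
        gfunPD2 x d r s Ψ =
          ∑ k ∈ Finset.range (d + 1), b k * (Polynomial.Chebyshev.T ℝ (k : ℤ)).eval x) ∧
      ∑ k ∈ Finset.range (d + 1), |b k| ≤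
        Real.sinh (∑ j ∈ Finset.range (d + 1), |Ψ j|) := by
  classical
  set P := (Finset.range (d + 1)).powerset with hP
  set term : Finset ℕ → ℝ := fun S => QSPAux.eSgn S * QSPAux.rcg d (QSPAux.o2 r s) S Ψ
    with hterm
  have hmap : ∀ S ∈ P, (QSPAux.mexp d S).natAbs ∈ Finset.range (d + 1) := fun S _ =>
    Finset.mem_range.mpr (Nat.lt_succ_of_le (QSPAux.abs_mexp_le d S))
  refine ⟨fun k => ∑ S ∈ P.filter (fun S => (QSPAux.mexp d S).natAbs = k), term S, ?_, ?_⟩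
  · intro x hx
    obtain ⟨hx1, hx2⟩ := hx
    have hcos : Real.cos (Real.arccos x) = x := Real.cos_arccos hx1 hx2
    have hsin : 0 ≤ Real.sin (Real.arccos x) := by
      rw [Real.sin_arccos]; positivity
    set θ := Real.arccos x with hθdef
    rw [← hcos]
    have hT : ∀ m : ℤ, (Polynomial.Chebyshev.T ℝ ((m.natAbs : ℕ) : ℤ)).eval (Real.cos θ)
        = Real.cos ((m : ℝ) * θ) := by
      intro m
      rw [Polynomial.Chebyshev.T_real_cos]
      have h1 : ((m.natAbs : ℕ) : ℝ) = |(m : ℝ)| := by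
        rw [← Int.cast_abs, Int.abs_eq_natAbs, Int.cast_natCast]
      rw [show (((m.natAbs : ℕ) : ℤ) : ℝ) = |(m : ℝ)| by push_cast; ring]
      rcases le_or_gt 0 (m : ℝ) with h | h
      · rw [abs_of_nonneg h]
      · rw [abs_of_neg h, neg_mul, Real.cos_neg]
    rw [QSPAux.gfunPD2_eq θ hsin d r s hr hs Ψ]
    calc ∑ S ∈ P, QSPAux.eSgn S * QSPAux.rcg d (QSPAux.o2 r s) S Ψ
            * Real.cos ((QSPAux.mexp d S : ℝ) * θ)
        = ∑ k ∈ Finset.range (d + 1), ∑ S ∈ P.filter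
            (fun S => (QSPAux.mexp d S).natAbs = k),
            term S * Real.cos ((QSPAux.mexp d S : ℝ) * θ) :=
          (Finset.sum_fiberwise_of_maps_to hmap _).symm
      _ = ∑ k ∈ Finset.range (d + 1), ∑ S ∈ P.filter
            (fun S => (QSPAux.mexp d S).natAbs = k),
            term S * (Polynomial.Chebyshev.T ℝ (k : ℤ)).eval (Real.cos θ) := by
          apply Finset.sum_congr rfl
          intro k hk
          apply Finset.sum_congr rfl
          intro S hS
          have hk' : (QSPAux.mexp d S).natAbs = k := (Finset.mem_filter.mp hS).2
          rw [← hk', hT (QSPAux.mexp d S)]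
      _ = ∑ k ∈ Finset.range (d + 1),
            (∑ S ∈ P.filter (fun S => (QSPAux.mexp d S).natAbs = k), term S)
              * (Polynomial.Chebyshev.T ℝ (k : ℤ)).eval (Real.cos θ) := by
          apply Finset.sum_congr rfl
          intro k hk
          rw [Finset.sum_mul]
  · have hrmem : r ∈ Finset.range (d + 1) := Finset.mem_range.mpr (Nat.lt_succ_of_le hr)
    have hsmem : s ∈ Finset.range (d + 1) := Finset.mem_range.mpr (Nat.lt_succ_of_le hs)
    calc ∑ k ∈ Finset.range (d + 1),
          |∑ S ∈ P.filter (fun S => (QSPAux.mexp d S).natAbs = k), term S|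
        ≤ ∑ k ∈ Finset.range (d + 1),
            ∑ S ∈ P.filter (fun S => (QSPAux.mexp d S).natAbs = k), |term S| :=
          Finset.sum_le_sum fun k _ => Finset.abs_sum_le_sum_abs _ _
      _ = ∑ S ∈ P, |term S| := Finset.sum_fiberwise_of_maps_to hmap _
      _ ≤ ∑ S ∈ P, (if Odd S.card then ∏ j ∈ QSPAux.Tset r s S, |Ψ j| else 0) := by
          apply Finset.sum_le_sum
          intro S hS
          have hsub : S ⊆ Finset.range (d + 1) := Finset.mem_powerset.mp hS
          by_cases hodd : Odd S.card
          · rw [if_pos hodd, hterm]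
            calc |QSPAux.eSgn S * QSPAux.rcg d (QSPAux.o2 r s) S Ψ|
                = |QSPAux.eSgn S| * |QSPAux.rcg d (QSPAux.o2 r s) S Ψ| := abs_mul _ _
              _ ≤ 1 * ∏ j ∈ QSPAux.Tset r s S, |Ψ j| := by
                  apply mul_le_mul (QSPAux.abs_eSgn_le S)
                    (QSPAux.abs_rcg_le d r s (Nat.lt_succ_of_le hr)
                      (Nat.lt_succ_of_le hs) S hsub Ψ) (abs_nonneg _) zero_le_one
              _ = ∏ j ∈ QSPAux.Tset r s S, |Ψ j| := one_mul _
          · rw [if_neg hodd, hterm]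
            simp [QSPAux.eSgn_eq_zero hodd]
      _ = ∑ T ∈ P, (if Odd T.card then ∏ j ∈ T, |Ψ j| else 0) := by
          apply Finset.sum_nbij' (i := QSPAux.Tset r s) (j := QSPAux.Tset' r s)
          · intro S hS
            exact Finset.mem_powerset.mpr
              (QSPAux.Tset_subset hrmem hsmem (Finset.mem_powerset.mp hS))
          · intro T hT
            exact Finset.mem_powerset.mpr
              (QSPAux.Tset'_subset hrmem hsmem (Finset.mem_powerset.mp hT))
          · intro S _; exact QSPAux.Tset'_Tset r s S
          · intro T _; exact QSPAux.Tset_Tset' r s T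
          · intro S _
            by_cases hodd : Odd S.card
            · rw [if_pos hodd, if_pos ((QSPAux.odd_card_Tset r s S).mpr hodd)]
            · rw [if_neg hodd, if_neg (fun h => hodd ((QSPAux.odd_card_Tset r s S).mp h))]
      _ ≤ Real.sinh (∑ j ∈ Finset.range (d + 1), |Ψ j|) :=
          (QSPAux.sum_odd_even_le _ _ fun j => abs_nonneg _).1
end
end

section
/- For every finitely supported real sequence Φ (reduced phase factors of the even-parity case), ‖F(Φ)‖₁ ≤ sinh(2·‖Φ‖₁). -/
open scoped Real
noncomputable section

namespace QSPaux

lemma expI_eq (ψ : ℝ) : Complex.exp (Complex.I * (ψ : ℂ)) =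
    ((Real.cos ψ : ℝ) : ℂ) + ((Real.sin ψ : ℝ) : ℂ) * Complex.I := by
  rw [mul_comm, Complex.exp_mul_I]
  simp [Complex.ofReal_cos, Complex.ofReal_sin]

lemma expI_neg_eq (ψ : ℝ) : Complex.exp (-(Complex.I * (ψ : ℂ))) =
    ((Real.cos ψ : ℝ) : ℂ) - ((Real.sin ψ : ℝ) : ℂ) * Complex.I := by
  have h : -(Complex.I * (ψ : ℂ)) = ((-ψ : ℝ) : ℂ) * Complex.I := by push_cast; ring
  rw [h, Complex.exp_mul_I]
  simp [Complex.ofReal_cos, Complex.ofReal_sin, sub_eq_add_neg]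

/-- signal matrix at `x = cos θ`, with `sin θ` in place of `√(1-x²)`. -/
def Wcs (θ : ℝ) : Matrix (Fin 2) (Fin 2) ℂ :=
  !![(Real.cos θ : ℂ), Complex.I * (Real.sin θ : ℂ);
     Complex.I * (Real.sin θ : ℂ), (Real.cos θ : ℂ)]

lemma Wmat_cos {θ : ℝ} (h0 : 0 ≤ θ) (h1 : θ ≤ π) : Wmat (Real.cos θ) = Wcs θ := by
  have h2 : 1 - Real.cos θ ^ 2 = Real.sin θ ^ 2 := by
    have := Real.sin_sq_add_cos_sq θ; nlinarith
  have h3 : Real.sqrt (1 - Real.cos θ ^ 2) = Real.sin θ := by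
    rw [h2, Real.sqrt_sq (Real.sin_nonneg_of_nonneg_of_le_pi h0 h1)]
  simp [Wmat, Wcs, h3]

abbrev Term : Type := ℂ × ℤ × Bool

def sgn (b : Bool) : ℤ := if b then 1 else -1

def Pval (L : List Term) (θ : ℝ) : ℂ :=
  (L.map fun t => t.1 * ((Real.cos ((t.2.1 : ℝ) * θ) : ℝ) : ℂ)).sum

def Qval (L : List Term) (θ : ℝ) : ℂ :=
  (L.map fun t => t.1 * ((sgn t.2.2 : ℤ) : ℂ) * Complex.I * ((Real.sin ((t.2.1 : ℝ) * θ) : ℝ) : ℂ)).sum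

def stepT (ψ : ℝ) (t : Term) : List Term :=
  [(t.1 * ((Real.cos ψ : ℝ) : ℂ), t.2.1 + sgn t.2.2, t.2.2),
   (Complex.I * t.1 * ((Real.sin ψ : ℝ) : ℂ), t.2.1 + sgn t.2.2, !t.2.2)]

def termsOf (l : List ℝ) : List Term :=
  l.foldl (fun acc ψ => acc.flatMap (stepT ψ)) [(1, 0, true)]

lemma termsOf_append (l : List ℝ) (ψ : ℝ) :
    termsOf (l ++ [ψ]) = (termsOf l).flatMap (stepT ψ) := by
  simp [termsOf, List.foldl_append]

lemma Pval_append (A B : List Term) (θ : ℝ) : Pval (A ++ B) θ = Pval A θ + Pval B θ := by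
  simp [Pval]

lemma Qval_append (A B : List Term) (θ : ℝ) : Qval (A ++ B) θ = Qval A θ + Qval B θ := by
  simp [Qval]

lemma Pval_cons (t : Term) (L : List Term) (θ : ℝ) :
    Pval (t :: L) θ = t.1 * ((Real.cos ((t.2.1 : ℝ) * θ) : ℝ) : ℂ) + Pval L θ := by
  simp [Pval]

lemma Qval_cons (t : Term) (L : List Term) (θ : ℝ) :
    Qval (t :: L) θ = t.1 * ((sgn t.2.2 : ℤ) : ℂ) * Complex.I * ((Real.sin ((t.2.1 : ℝ) * θ) : ℝ) : ℂ) + Qval L θ := by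
  simp [Qval]

lemma Pval_stepT (ψ θ : ℝ) (t : Term) :
    Pval (stepT ψ t) θ =
      t.1 * ((Real.cos ((t.2.1 : ℝ) * θ) : ℝ) : ℂ) * (((Real.cos θ : ℝ) : ℂ) * Complex.exp (Complex.I * (ψ : ℂ)))
      + t.1 * ((sgn t.2.2 : ℤ) : ℂ) * Complex.I * ((Real.sin ((t.2.1 : ℝ) * θ) : ℝ) : ℂ)
        * (Complex.I * ((Real.sin θ : ℝ) : ℂ) * Complex.exp (Complex.I * (ψ : ℂ))) := by
  obtain ⟨c, m, b⟩ := t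
  rw [expI_eq]
  simp only [Pval, stepT, List.map_cons, List.map_nil, List.sum_cons, List.sum_nil, add_zero]
  cases b <;> simp only [sgn, if_true, if_false] <;> push_cast
  · rw [show ((m:ℂ) + -1) * (θ:ℂ) = (m:ℂ)*θ - θ from by ring, Complex.cos_sub]
    ring_nf
    simp only [show Complex.I^3 = -Complex.I from by rw [pow_succ, Complex.I_sq]; ring, Complex.I_sq]
    ring
  · rw [show ((m:ℂ) + 1) * (θ:ℂ) = (m:ℂ)*θ + θ from by ring, Complex.cos_add]
    ring_nf
    simp only [show Complex.I^3 = -Complex.I from by rw [pow_succ, Complex.I_sq]; ring, Complex.I_sq]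
    ring

lemma Qval_stepT (ψ θ : ℝ) (t : Term) :
    Qval (stepT ψ t) θ =
      t.1 * ((Real.cos ((t.2.1 : ℝ) * θ) : ℝ) : ℂ) * (Complex.I * ((Real.sin θ : ℝ) : ℂ) * Complex.exp (-(Complex.I * (ψ : ℂ))))
      + t.1 * ((sgn t.2.2 : ℤ) : ℂ) * Complex.I * ((Real.sin ((t.2.1 : ℝ) * θ) : ℝ) : ℂ)
        * (((Real.cos θ : ℝ) : ℂ) * Complex.exp (-(Complex.I * (ψ : ℂ)))) := by
  obtain ⟨c, m, b⟩ := t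
  rw [expI_neg_eq]
  simp only [Qval, stepT, List.map_cons, List.map_nil, List.sum_cons, List.sum_nil, add_zero]
  cases b <;> simp only [sgn, Bool.not_true, Bool.not_false, if_true, if_false] <;> push_cast
  · rw [show ((m:ℂ) + -1) * (θ:ℂ) = (m:ℂ)*θ - θ from by ring, Complex.sin_sub]
    ring_nf
  · rw [show ((m:ℂ) + 1) * (θ:ℂ) = (m:ℂ)*θ + θ from by ring, Complex.sin_add]
    ring_nf

end QSPaux

namespace QSPaux

lemma Pval_flatMap (L : List Term) (ψ θ : ℝ) :
    Pval (L.flatMap (stepT ψ)) θ =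
      Pval L θ * (((Real.cos θ : ℝ) : ℂ) * Complex.exp (Complex.I * (ψ : ℂ)))
      + Qval L θ * (Complex.I * ((Real.sin θ : ℝ) : ℂ) * Complex.exp (Complex.I * (ψ : ℂ))) := by
  induction L with
  | nil => simp [Pval, Qval]
  | cons t L ih =>
      rw [List.flatMap_cons, Pval_append, Pval_stepT, Pval_cons, Qval_cons, ih]; ring

lemma Qval_flatMap (L : List Term) (ψ θ : ℝ) :
    Qval (L.flatMap (stepT ψ)) θ =
      Pval L θ * (Complex.I * ((Real.sin θ : ℝ) : ℂ) * Complex.exp (-(Complex.I * (ψ : ℂ))))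
      + Qval L θ * (((Real.cos θ : ℝ) : ℂ) * Complex.exp (-(Complex.I * (ψ : ℂ)))) := by
  induction L with
  | nil => simp [Pval, Qval]
  | cons t L ih =>
      rw [List.flatMap_cons, Qval_append, Qval_stepT, Pval_cons, Qval_cons, ih]; ring

lemma WexpZ_entries (θ ψ : ℝ) :
    Wcs θ * expZ ψ =
      !![((Real.cos θ : ℝ) : ℂ) * Complex.exp (Complex.I * (ψ : ℂ)),
         Complex.I * ((Real.sin θ : ℝ) : ℂ) * Complex.exp (-(Complex.I * (ψ : ℂ)));
         Complex.I * ((Real.sin θ : ℝ) : ℂ) * Complex.exp (Complex.I * (ψ : ℂ)),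
         ((Real.cos θ : ℝ) : ℂ) * Complex.exp (-(Complex.I * (ψ : ℂ)))] := by
  simp [Wcs, expZ, Matrix.mul_fin_two]

lemma row0 (l : List ℝ) (θ : ℝ) :
    ((l.map fun ψ => Wcs θ * expZ ψ).prod 0 0 = Pval (termsOf l) θ) ∧
    ((l.map fun ψ => Wcs θ * expZ ψ).prod 0 1 = Qval (termsOf l) θ) := by
  induction l using List.reverseRecOn with
  | nil => simp [termsOf, Pval, Qval, Matrix.one_apply]
  | append_singleton l ψ ih =>
      rw [List.map_append, List.prod_append, List.map_singleton, List.prod_singleton,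
        termsOf_append]
      constructor
      · rw [Matrix.mul_apply, Fin.sum_univ_two, Pval_flatMap, ih.1, ih.2, WexpZ_entries]
        simp
      · rw [Matrix.mul_apply, Fin.sum_univ_two, Qval_flatMap, ih.1, ih.2, WexpZ_entries]
        simp

end QSPaux

namespace QSPaux

def ReSum (L : List Term) : ℝ := (L.map fun t => |t.1.re|).sum
def ImSum (L : List Term) : ℝ := (L.map fun t => |t.1.im|).sum

lemma ReSum_nonneg (L : List Term) : 0 ≤ ReSum L := by
  apply List.sum_nonneg; intro x hx
  obtain ⟨t, _, rfl⟩ := List.mem_map.mp hx; exact abs_nonneg _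

lemma ImSum_nonneg (L : List Term) : 0 ≤ ImSum L := by
  apply List.sum_nonneg; intro x hx
  obtain ⟨t, _, rfl⟩ := List.mem_map.mp hx; exact abs_nonneg _

lemma ReSum_append (A B : List Term) : ReSum (A ++ B) = ReSum A + ReSum B := by
  simp [ReSum]

lemma ImSum_append (A B : List Term) : ImSum (A ++ B) = ImSum A + ImSum B := by
  simp [ImSum]

lemma ReSum_flatMap (L : List Term) (ψ : ℝ) :
    ReSum (L.flatMap (stepT ψ)) = |Real.cos ψ| * ReSum L + |Real.sin ψ| * ImSum L := by
  induction L with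
  | nil => simp [ReSum, ImSum]
  | cons t L ih =>
      rw [List.flatMap_cons, ReSum_append, ih]
      have h : ReSum (stepT ψ t) = |Real.cos ψ| * |t.1.re| + |Real.sin ψ| * |t.1.im| := by
        simp [ReSum, stepT, Complex.mul_re, abs_mul, Complex.cos_ofReal_re, Complex.sin_ofReal_re]
        ring
      rw [h]
      simp [ReSum, ImSum]
      ring

lemma ImSum_flatMap (L : List Term) (ψ : ℝ) :
    ImSum (L.flatMap (stepT ψ)) = |Real.cos ψ| * ImSum L + |Real.sin ψ| * ReSum L := by
  induction L with
  | nil => simp [ReSum, ImSum]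
  | cons t L ih =>
      rw [List.flatMap_cons, ImSum_append, ih]
      have h : ImSum (stepT ψ t) = |Real.cos ψ| * |t.1.im| + |Real.sin ψ| * |t.1.re| := by
        simp [ImSum, stepT, Complex.mul_im, abs_mul, Complex.cos_ofReal_re, Complex.sin_ofReal_re]
        ring
      rw [h]
      simp [ReSum, ImSum]
      ring

lemma abs_sum_nonneg (l : List ℝ) : 0 ≤ (l.map (fun x => |x|)).sum := by
  apply List.sum_nonneg; intro x hx
  obtain ⟨t, _, rfl⟩ := List.mem_map.mp hx; exact abs_nonneg _

lemma terms_bound (l : List ℝ) :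
    ReSum (termsOf l) ≤ Real.cosh ((l.map (fun x => |x|)).sum) ∧
    ImSum (termsOf l) ≤ Real.sinh ((l.map (fun x => |x|)).sum) := by
  induction l using List.reverseRecOn with
  | nil => simp [termsOf, ReSum, ImSum]
  | append_singleton l ψ ih =>
      rw [termsOf_append, ReSum_flatMap, ImSum_flatMap]
      have hS : (((l ++ [ψ]).map (fun x => |x|)).sum) = ((l.map (fun x => |x|)).sum) + |ψ| := by
        simp
      set S := (l.map (fun x => |x|)).sum with hSdef
      have hS0 : 0 ≤ S := abs_sum_nonneg l
      have h1 : |Real.cos ψ| ≤ Real.cosh |ψ| := le_trans (Real.abs_cos_le_one ψ) (Real.one_le_cosh _)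
      have h2 : |Real.sin ψ| ≤ Real.sinh |ψ| :=
        le_trans (Real.abs_sin_le_abs) (Real.self_le_sinh_iff.mpr (abs_nonneg ψ))
      have hcosh0 : (0:ℝ) ≤ Real.cosh |ψ| := (Real.cosh_pos _).le
      have hsinh0 : (0:ℝ) ≤ Real.sinh |ψ| := Real.sinh_nonneg_iff.mpr (abs_nonneg ψ)
      have hsinhS : 0 ≤ Real.sinh S := Real.sinh_nonneg_iff.mpr hS0
      have hcoshS : 0 ≤ Real.cosh S := (Real.cosh_pos _).le
      rw [hS]
      have A1 : |Real.cos ψ| * ReSum (termsOf l) ≤ Real.cosh |ψ| * Real.cosh S :=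
        mul_le_mul h1 ih.1 (ReSum_nonneg _) hcosh0
      have A2 : |Real.sin ψ| * ImSum (termsOf l) ≤ Real.sinh |ψ| * Real.sinh S :=
        mul_le_mul h2 ih.2 (ImSum_nonneg _) hsinh0
      have A3 : |Real.cos ψ| * ImSum (termsOf l) ≤ Real.cosh |ψ| * Real.sinh S :=
        mul_le_mul h1 ih.2 (ImSum_nonneg _) hcosh0
      have A4 : |Real.sin ψ| * ReSum (termsOf l) ≤ Real.sinh |ψ| * Real.cosh S :=
        mul_le_mul h2 ih.1 (ReSum_nonneg _) hsinh0
      constructor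
      · rw [Real.cosh_add]; nlinarith [A1, A2]
      · rw [Real.sinh_add]; nlinarith [A3, A4]

lemma freq_le (l : List ℝ) : ∀ t ∈ termsOf l, t.2.1.natAbs ≤ l.length := by
  induction l using List.reverseRecOn with
  | nil => intro t ht; simp [termsOf] at ht; subst ht; simp
  | append_singleton l ψ ih =>
      intro t ht
      rw [termsOf_append] at ht
      obtain ⟨s, hs, hts⟩ := List.mem_flatMap.mp ht
      have hb : (sgn s.2.2).natAbs = 1 := by cases s.2.2 <;> simp [sgn]
      have hle := Int.natAbs_add_le s.2.1 (sgn s.2.2)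
      have hlen : s.2.1.natAbs ≤ l.length := ih s hs
      simp only [stepT, List.mem_cons, List.mem_singleton] at hts
      rcases hts with rfl | hts
      · simp only [List.length_append, List.length_singleton]
        omega
      · rcases hts with rfl | h
        · simp only [List.length_append, List.length_singleton]
          omega
        · exact absurd h List.not_mem_nil

end QSPaux

namespace QSPaux

lemma integral_cos_int (n : ℤ) :
    ∫ θ in (0:ℝ)..(2*π), Real.cos ((n:ℝ)*θ) = if n = 0 then 2*π else 0 := by
  by_cases h : n = 0
  · simp [h]
  · rw [if_neg h]
    have hn : ((n:ℝ)) ≠ 0 := Int.cast_ne_zero.mpr h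
    have hd : ∀ θ : ℝ, HasDerivAt (fun θ : ℝ => Real.sin ((n:ℝ)*θ) / n) (Real.cos ((n:ℝ)*θ)) θ := by
      intro θ
      have h1 : HasDerivAt (fun θ : ℝ => (n:ℝ)*θ) (n:ℝ) θ := by
        simpa using (hasDerivAt_id θ).const_mul (n:ℝ)
      have h2 := (Real.hasDerivAt_sin ((n:ℝ)*θ)).comp θ h1
      have h3 := h2.div_const (n:ℝ)
      simpa [mul_comm, mul_div_assoc, mul_div_cancel_left₀, hn] using h3
    rw [intervalIntegral.integral_eq_sub_of_hasDerivAt (fun θ _ => hd θ)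
      ((Real.continuous_cos.comp (continuous_const.mul continuous_id)).intervalIntegrable _ _)]
    have h4 : (n:ℝ) * (2*π) = ((2*n : ℤ):ℝ) * π := by push_cast; ring
    have h5 : Real.sin ((n:ℝ) * (2*π)) = 0 := by rw [h4]; exact Real.sin_int_mul_pi _
    simp [h5]

lemma orth (m : ℤ) (k : ℕ) :
    ∫ θ in (0:ℝ)..(2*π), Real.cos ((m:ℝ)*θ) * Real.cos ((k:ℝ)*θ)
      = if m.natAbs = k then (if k = 0 then 2*π else π) else 0 := by
  have hint : ∀ c : ℝ, IntervalIntegrable (fun θ => Real.cos (c*θ)) MeasureTheory.volume 0 (2*π) :=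
    fun c => (Real.continuous_cos.comp (continuous_const.mul continuous_id)).intervalIntegrable _ _
  have hfun : ∀ θ : ℝ, Real.cos ((m:ℝ)*θ) * Real.cos ((k:ℝ)*θ)
      = (Real.cos ((((m+k:ℤ)):ℝ)*θ) + Real.cos ((((m-k:ℤ)):ℝ)*θ))/2 := by
    intro θ
    have e1 : (((m+k:ℤ)):ℝ)*θ = (m:ℝ)*θ + (k:ℝ)*θ := by push_cast; ring
    have e2 : (((m-k:ℤ)):ℝ)*θ = (m:ℝ)*θ - (k:ℝ)*θ := by push_cast; ring
    rw [e1, e2, Real.cos_add, Real.cos_sub]; ring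
  rw [intervalIntegral.integral_congr (g := fun θ => (Real.cos ((((m+k:ℤ)):ℝ)*θ) + Real.cos ((((m-k:ℤ)):ℝ)*θ))/2) (fun θ _ => hfun θ)]
  rw [intervalIntegral.integral_div, intervalIntegral.integral_add (hint _) (hint _),
    integral_cos_int, integral_cos_int]
  by_cases h : m.natAbs = k
  · rw [if_pos h]
    by_cases hk : k = 0
    · have hm : m = 0 := by omega
      rw [if_pos hk]; subst hm; subst hk; norm_num
    · rw [if_neg hk]
      rcases Int.natAbs_eq m with he | he
      · have h1 : m + k ≠ 0 := by omega
        have h2 : m - k = 0 := by omega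
        rw [if_neg h1, if_pos h2]; ring
      · have h1 : m + k = 0 := by omega
        have h2 : m - k ≠ 0 := by omega
        rw [if_pos h1, if_neg h2]; ring
  · rw [if_neg h]
    have h1 : m + k ≠ 0 := by omega
    have h2 : m - k ≠ 0 := by omega
    rw [if_neg h1, if_neg h2]; norm_num

end QSPaux

namespace QSPaux

lemma cont_list_sum {α : Type*} (L : List α) (F : α → ℝ → ℝ) (h : ∀ a ∈ L, Continuous (F a)) :
    Continuous fun θ => (L.map fun a => F a θ).sum := by
  induction L with
  | nil => simpa using continuous_const
  | cons a L ih =>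
      simp only [List.map_cons, List.sum_cons]
      exact (h a (by simp)).add (ih fun b hb => h b (by simp [hb]))

lemma integral_list_sum {α : Type*} (L : List α) (F : α → ℝ → ℝ) (h : ∀ a ∈ L, Continuous (F a))
    (lo hi : ℝ) :
    ∫ θ in lo..hi, (L.map fun a => F a θ).sum = (L.map fun a => ∫ θ in lo..hi, F a θ).sum := by
  induction L with
  | nil => simp
  | cons a L ih =>
      simp only [List.map_cons, List.sum_cons]
      rw [intervalIntegral.integral_add ((h a (by simp)).intervalIntegrable _ _)
        ((cont_list_sum L F fun b hb => h b (by simp [hb])).intervalIntegrable _ _),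
        ih fun b hb => h b (by simp [hb])]

lemma list_sum_mul_left {α : Type*} (L : List α) (f : α → ℝ) (c : ℝ) :
    c * (L.map f).sum = (L.map fun t => c * f t).sum := by
  induction L with
  | nil => simp
  | cons a L ih => simp only [List.map_cons, List.sum_cons, mul_add, ih]

lemma list_sum_mul_right {α : Type*} (L : List α) (f : α → ℝ) (c : ℝ) :
    (L.map f).sum * c = (L.map fun t => f t * c).sum := by
  induction L with
  | nil => simp
  | cons a L ih => simp only [List.map_cons, List.sum_cons, add_mul, ih]

lemma list_abs_sum_le {α : Type*} (L : List α) (f : α → ℝ) :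
    |(L.map f).sum| ≤ (L.map fun t => |f t|).sum := by
  induction L with
  | nil => simp
  | cons a L ih =>
      simp only [List.map_cons, List.sum_cons]
      exact le_trans (abs_add_le _ _) (add_le_add le_rfl ih)

lemma list_sum_le_sum {α : Type*} (L : List α) (f g : α → ℝ) (h : ∀ a ∈ L, f a ≤ g a) :
    (L.map f).sum ≤ (L.map g).sum := by
  induction L with
  | nil => simp
  | cons a L ih =>
      simp only [List.map_cons, List.sum_cons]
      exact add_le_add (h a (by simp)) (ih fun b hb => h b (by simp [hb]))

lemma list_sum_im (L : List Term) (f : Term → ℂ) :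
    ((L.map f).sum).im = (L.map fun t => (f t).im).sum := by
  induction L with
  | nil => simp
  | cons a L ih => simp [ih]

lemma finset_swap_list {α : Type*} (s : Finset ℕ) (L : List α) (G : ℕ → α → ℝ) :
    ∑ j ∈ s, (L.map fun t => G j t).sum = (L.map fun t => ∑ j ∈ s, G j t).sum := by
  induction L with
  | nil => simp
  | cons a L ih =>
      simp only [List.map_cons, List.sum_cons, Finset.sum_add_distrib, ih]

lemma sum_ite_le (K : ℕ) (v : ℝ) (hv : 0 ≤ v) (N : ℕ) :
    ∑ j ∈ Finset.range N, (if K = 2*j then v else 0) ≤ v := by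
  induction N with
  | zero => simpa using hv
  | succ N ih =>
      rw [Finset.sum_range_succ]
      by_cases h : K = 2*N
      · have hz : ∑ j ∈ Finset.range N, (if K = 2*j then v else 0) = 0 :=
          Finset.sum_eq_zero fun j hj => if_neg (by have := Finset.mem_range.mp hj; omega)
        rw [hz, if_pos h]; simpa
      · rw [if_neg h]; simpa using ih

lemma list_range_sum (d : ℕ) (f : ℕ → ℝ) :
    (((List.range d).map f).sum) = ∑ j ∈ Finset.range d, f j := by
  induction d with
  | zero => simp
  | succ d ih => rw [List.range_succ, Finset.sum_range_succ, List.map_append]; simp [ih]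

end QSPaux

namespace QSPaux

lemma im_mul_Pval (z : ℂ) (L : List Term) (θ : ℝ) :
    (z * Pval L θ).im = (L.map fun t => (z * t.1).im * Real.cos ((t.2.1:ℝ)*θ)).sum := by
  induction L with
  | nil => simp [Pval]
  | cons t L ih =>
      rw [Pval_cons, mul_add, Complex.add_im, ih, List.map_cons, List.sum_cons]
      congr 1
      rw [← mul_assoc]
      simp only [Complex.mul_im, Complex.ofReal_re, Complex.ofReal_im]; ring





lemma expZ_row0 (a : ℝ) (M : Matrix (Fin 2) (Fin 2) ℂ) :
    (expZ a * M) 0 0 = Complex.exp (Complex.I * (a:ℂ)) * M 0 0 := by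
  rw [Matrix.mul_apply, Fin.sum_univ_two]
  simp [expZ]

lemma gfun_cos_eq (d : ℕ) (Ψ : ℕ → ℝ) (θ : ℝ) :
    gfun (Real.cos θ) d Ψ = ((termsOf ((List.range d).map fun j => Ψ (j+1))).map
      fun t => (Complex.exp (Complex.I * ((Ψ 0 : ℝ):ℂ)) * t.1).im * Real.cos ((t.2.1:ℝ) * θ)).sum := by
  have key : ∀ φ : ℝ, 0 ≤ φ → φ ≤ π →
      gfun (Real.cos φ) d Ψ = ((termsOf ((List.range d).map fun j => Ψ (j+1))).map
        fun t => (Complex.exp (Complex.I * ((Ψ 0 : ℝ):ℂ)) * t.1).im * Real.cos ((t.2.1:ℝ) * φ)).sum := by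
    intro φ h0 h1
    have hW : (fun j => Wmat (Real.cos φ) * expZ (Ψ (j+1)))
        = fun j => Wcs φ * expZ (Ψ (j+1)) := by
      funext j; rw [Wmat_cos h0 h1]
    have hmap : (List.range d).map (fun j => Wmat (Real.cos φ) * expZ (Ψ (j+1)))
        = ((List.range d).map fun j => Ψ (j+1)).map (fun ψ => Wcs φ * expZ ψ) := by
      rw [hW, List.map_map]; rfl
    rw [gfun, Umat, hmap, expZ_row0, (row0 _ φ).1, im_mul_Pval]
  set θ' := Real.arccos (Real.cos θ) with hθ'
  have hcos : Real.cos θ' = Real.cos θ := Real.cos_arccos (Real.neg_one_le_cos θ) (Real.cos_le_one θ)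
  have hmcos : ∀ m : ℤ, Real.cos ((m:ℝ)*θ') = Real.cos ((m:ℝ)*θ) := by
    intro m
    have a1 := Polynomial.Chebyshev.T_real_cos θ' m
    have a2 := Polynomial.Chebyshev.T_real_cos θ m
    rw [← a1, ← a2, hcos]
  have h2 := key θ' (Real.arccos_nonneg _) (Real.arccos_le_pi _)
  rw [hcos] at h2
  rw [h2]
  exact congrArg _ (List.map_congr_left fun t ht => by rw [hmcos t.2.1])

end QSPaux

namespace QSPaux

lemma list_sum_add {α : Type*} (L : List α) (f g : α → ℝ) :
    (L.map fun t => f t + g t).sum = (L.map f).sum + (L.map g).sum := by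
  induction L with
  | nil => simp
  | cons a L ih => simp only [List.map_cons, List.sum_cons, ih]; ring

lemma fmap_eq (Φ : ℕ →₀ ℝ) (j : ℕ) :
    Fmap Φ j = ((termsOf ((List.range (2 * nOf Φ - 2)).map fun k => pad Φ (nOf Φ) (k+1))).map
      fun t => if t.2.1.natAbs = 2*j then
        (Complex.exp (Complex.I * ((pad Φ (nOf Φ) 0 : ℝ):ℂ)) * t.1).im else 0).sum := by
  set Ψ := pad Φ (nOf Φ) with hΨ
  set d := 2 * nOf Φ - 2 with hd
  set L := termsOf ((List.range d).map fun k => Ψ (k+1)) with hL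
  set A : Term → ℝ := fun t => (Complex.exp (Complex.I * ((Ψ 0 : ℝ):ℂ)) * t.1).im with hA
  have hfun : (fun θ => gred (Real.cos θ) Φ * Real.cos (2*(j:ℝ)*θ))
      = fun θ => (L.map fun t => A t * (Real.cos ((t.2.1:ℝ)*θ) * Real.cos (((2*j:ℕ):ℝ)*θ))).sum := by
    funext θ
    rw [gred, gfun_cos_eq, list_sum_mul_right]
    have hc : ((2*j:ℕ):ℝ) = 2*(j:ℝ) := by push_cast; ring
    rw [hc]
    congr 1
    apply List.map_congr_left
    intro t _
    ring
  have hFmap : Fmap Φ j = (if j = 0 then 1 / (2 * π) else 1 / π) *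
      ∫ θ in (0:ℝ)..(2*π), (L.map fun t => A t * (Real.cos ((t.2.1:ℝ)*θ) * Real.cos (((2*j:ℕ):ℝ)*θ))).sum := by
    rw [Fmap, chebCoeff, ← hfun]
  rw [hFmap, integral_list_sum _ _ (fun t _ => by
    exact continuous_const.mul ((Real.continuous_cos.comp (continuous_const.mul continuous_id)).mul
      (Real.continuous_cos.comp (continuous_const.mul continuous_id))))]
  have horth : (L.map fun t => ∫ θ in (0:ℝ)..(2*π), A t * (Real.cos ((t.2.1:ℝ)*θ) * Real.cos (((2*j:ℕ):ℝ)*θ))).sum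
      = (L.map fun t => A t * (if t.2.1.natAbs = 2*j then (if 2*j = 0 then 2*π else π) else 0)).sum := by
    congr 1
    apply List.map_congr_left
    intro t _
    rw [intervalIntegral.integral_const_mul, orth t.2.1 (2*j)]
  rw [horth, list_sum_mul_left]
  congr 1
  apply List.map_congr_left
  intro t _
  by_cases hj : j = 0
  · subst hj
    rw [if_pos rfl]
    by_cases hm : t.2.1.natAbs = 2*0
    · rw [if_pos hm, if_pos rfl, if_pos hm]
      show 1/(2*π) * (A t * (2*π)) = A t
      field_simp
    · rw [if_neg hm, if_neg hm, mul_zero, mul_zero]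
  · rw [if_neg hj]
    by_cases hm : t.2.1.natAbs = 2*j
    · rw [if_pos hm, if_neg (by omega), if_pos hm]
      show 1/π * (A t * π) = A t
      field_simp
    · rw [if_neg hm, if_neg hm, mul_zero, mul_zero]

lemma support_subset (Φ : ℕ →₀ ℝ) : Φ.support ⊆ Finset.range (nOf Φ) := by
  intro k hk
  rw [Finset.mem_range, nOf]
  have : id k ≤ Φ.support.sup id := Finset.le_sup hk
  simpa using Nat.lt_succ_of_le this

lemma l1_eq_range (Φ : ℕ →₀ ℝ) : l1 Φ = ∑ k ∈ Finset.range (nOf Φ), |Φ k| := by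
  rw [l1]
  apply Finset.sum_subset (support_subset Φ)
  intro k _ hk
  rw [Finsupp.notMem_support_iff.mp hk, abs_zero]

lemma pad_sum (Φ : ℕ →₀ ℝ) :
    |pad Φ (nOf Φ) 0| + ∑ k ∈ Finset.range (2 * nOf Φ - 2), |pad Φ (nOf Φ) (k+1)|
      = 2 * l1 Φ := by
  set n := nOf Φ with hn
  obtain ⟨m, hm⟩ : ∃ m, n = m + 1 := ⟨Φ.support.sup id, by rw [hn, nOf]⟩
  rw [hm]
  have h2 : 2*(m+1)-2 = 2*m := by omega
  rw [h2]
  have hcomb : |pad Φ (m+1) 0| + ∑ k ∈ Finset.range (2*m), |pad Φ (m+1) (k+1)|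
      = ∑ j ∈ Finset.range (2*m+1), |pad Φ (m+1) j| := by
    rw [Finset.sum_range_succ']; ring
  rw [hcomb, ← Finset.sum_range_add_sum_Ico _ (by omega : m+1 ≤ 2*m+1),
    Finset.sum_range_succ]
  have hlast : pad Φ (m+1) m = 2 * Φ 0 := by
    rw [pad]; rw [if_neg (by omega), if_pos (by omega)]
  rw [hlast]
  have hA : ∑ j ∈ Finset.range m, |pad Φ (m+1) j| = ∑ i ∈ Finset.range m, |Φ (i+1)| := by
    have hc : ∀ i ∈ Finset.range m, |pad Φ (m+1) i| = |Φ (m - i)| := by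
      intro i hi; have := Finset.mem_range.mp hi
      rw [pad, if_pos (by omega)]
      congr 1
    rw [Finset.sum_congr rfl hc]
    have hr := Finset.sum_range_reflect (fun i => |Φ (i+1)|) m
    rw [← hr]
    apply Finset.sum_congr rfl
    intro i hi; have := Finset.mem_range.mp hi
    congr 2; omega
  have hB : ∑ j ∈ Finset.Ico (m+1) (2*m+1), |pad Φ (m+1) j| = ∑ i ∈ Finset.range m, |Φ (i+1)| := by
    rw [Finset.sum_Ico_eq_sum_range]
    have h3 : 2*m+1-(m+1) = m := by omega
    rw [h3]
    apply Finset.sum_congr rfl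
    intro i hi; have := Finset.mem_range.mp hi
    rw [pad, if_neg (by omega), if_neg (by omega)]
    congr 2
    omega
  rw [hA, hB, l1_eq_range, ← hn, hm, Finset.sum_range_succ', abs_mul, abs_two]
  ring

lemma list_sum_imre (L : List Term) (c : ℝ) :
    (L.map fun t => |t.1.im| + c * |t.1.re|).sum = ImSum L + c * ReSum L := by
  induction L with
  | nil => simp [ImSum, ReSum]
  | cons a L ih => simp only [List.map_cons, List.sum_cons, ih, ImSum, ReSum]; ring


end QSPaux

/-- `‖F(Φ)‖₁ ≤ sinh(2‖Φ‖₁)` for every finitely supported `Φ`. -/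
theorem Fmap_one_norm_bound (Φ : ℕ →₀ ℝ) :
    Summable (fun j => |Fmap Φ j|) ∧
    ∑' j, |Fmap Φ j| ≤ Real.sinh (2 * l1 Φ) := by
  classical
  set l := (List.range (2 * nOf Φ - 2)).map (fun k => pad Φ (nOf Φ) (k+1)) with hl
  set L := QSPaux.termsOf l with hL
  set A : QSPaux.Term → ℝ :=
    fun t => (Complex.exp (Complex.I * ((pad Φ (nOf Φ) 0 : ℝ):ℂ)) * t.1).im with hA
  set E : ℕ → ℝ := fun j => (L.map fun t => if t.2.1.natAbs = 2*j then A t else 0).sum with hE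
  have hFE : ∀ j, Fmap Φ j = E j := fun j => QSPaux.fmap_eq Φ j
  have hlen : l.length = 2 * nOf Φ - 2 := by rw [hl]; simp
  set N := (2 * nOf Φ - 2) + 1 with hN
  have hE0 : ∀ j, j ∉ Finset.range N → E j = 0 := by
    intro j hj
    rw [Finset.mem_range, not_lt] at hj
    apply List.sum_eq_zero
    intro x hx
    obtain ⟨t, ht, rfl⟩ := List.mem_map.mp hx
    have hfreq : t.2.1.natAbs ≤ l.length := QSPaux.freq_le l t ht
    rw [hlen] at hfreq
    rw [if_neg (by omega)]
  have hsum : Summable (fun j => |Fmap Φ j|) := by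
    apply summable_of_ne_finset_zero (s := Finset.range N)
    intro j hj
    rw [hFE j, hE0 j hj, abs_zero]
  refine ⟨hsum, ?_⟩
  have htsum : ∑' j, |Fmap Φ j| = ∑ j ∈ Finset.range N, |E j| := by
    rw [tsum_eq_sum (s := Finset.range N) (fun j hj => by rw [hFE j, hE0 j hj, abs_zero])]
    exact Finset.sum_congr rfl fun j _ => by rw [hFE j]
  rw [htsum]
  have step1 : ∀ j, |E j| ≤ (L.map fun t => if t.2.1.natAbs = 2*j then |A t| else 0).sum := by
    intro j
    refine le_trans (QSPaux.list_abs_sum_le L _) (le_of_eq ?_)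
    congr 1
    apply List.map_congr_left
    intro t _
    by_cases hm : t.2.1.natAbs = 2*j <;> simp [hm]
  have step2 : ∑ j ∈ Finset.range N, |E j|
      ≤ (L.map fun t => ∑ j ∈ Finset.range N, if t.2.1.natAbs = 2*j then |A t| else 0).sum := by
    calc ∑ j ∈ Finset.range N, |E j|
        ≤ ∑ j ∈ Finset.range N, (L.map fun t => if t.2.1.natAbs = 2*j then |A t| else 0).sum :=
          Finset.sum_le_sum fun j _ => step1 j
      _ = _ := QSPaux.finset_swap_list _ _ _
  have step3 : (L.map fun t => ∑ j ∈ Finset.range N, if t.2.1.natAbs = 2*j then |A t| else 0).sum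
      ≤ (L.map fun t => |A t|).sum := by
    apply QSPaux.list_sum_le_sum
    intro t _
    exact QSPaux.sum_ite_le _ _ (abs_nonneg _) N
  have hAbd : ∀ t : QSPaux.Term, |A t| ≤ |t.1.im| + |pad Φ (nOf Φ) 0| * |t.1.re| := by
    intro t
    have he : A t = Real.cos (pad Φ (nOf Φ) 0) * t.1.im + Real.sin (pad Φ (nOf Φ) 0) * t.1.re := by
      rw [hA]
      simp only [QSPaux.expI_eq, Complex.add_im, Complex.add_re, Complex.mul_im,
        Complex.ofReal_re, Complex.ofReal_im, Complex.I_re, Complex.I_im, Complex.mul_re]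
      ring
    rw [he]
    refine le_trans (abs_add_le _ _) ?_
    rw [abs_mul, abs_mul]
    have h1 := mul_le_mul_of_nonneg_right (Real.abs_cos_le_one (pad Φ (nOf Φ) 0)) (abs_nonneg t.1.im)
    have h2 := mul_le_mul_of_nonneg_right (Real.abs_sin_le_abs (x := pad Φ (nOf Φ) 0)) (abs_nonneg t.1.re)
    linarith [one_mul |t.1.im|]
  have step4 : (L.map fun t => |A t|).sum
      ≤ QSPaux.ImSum L + |pad Φ (nOf Φ) 0| * QSPaux.ReSum L := by
    refine le_trans (QSPaux.list_sum_le_sum L _ _ (fun t _ => hAbd t)) (le_of_eq ?_)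
    exact QSPaux.list_sum_imre L _
  have hSl : (l.map (fun x => |x|)).sum = ∑ k ∈ Finset.range (2*nOf Φ - 2), |pad Φ (nOf Φ) (k+1)| := by
    rw [hl, List.map_map]
    exact QSPaux.list_range_sum _ _
  have hbound := QSPaux.terms_bound l
  have hS0 : 0 ≤ (l.map (fun x => |x|)).sum := QSPaux.abs_sum_nonneg l
  have hψ0 : |pad Φ (nOf Φ) 0| + (l.map (fun x => |x|)).sum = 2 * l1 Φ := by
    rw [hSl]
    exact QSPaux.pad_sum Φ
  have final : QSPaux.ImSum L + |pad Φ (nOf Φ) 0| * QSPaux.ReSum L ≤ Real.sinh (2 * l1 Φ) := by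
    rw [← hψ0, Real.sinh_add]
    have h1 : QSPaux.ImSum L ≤ Real.sinh ((l.map (fun x => |x|)).sum) := hbound.2
    have h2 : QSPaux.ReSum L ≤ Real.cosh ((l.map (fun x => |x|)).sum) := hbound.1
    have h3 : |pad Φ (nOf Φ) 0| ≤ Real.sinh |pad Φ (nOf Φ) 0| :=
      Real.self_le_sinh_iff.mpr (abs_nonneg _)
    have h4 : (1:ℝ) ≤ Real.cosh |pad Φ (nOf Φ) 0| := Real.one_le_cosh _
    have h5 : 0 ≤ Real.sinh ((l.map (fun x => |x|)).sum) := Real.sinh_nonneg_iff.mpr hS0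
    have h6 : 0 ≤ Real.cosh ((l.map (fun x => |x|)).sum) := (Real.cosh_pos _).le
    have h7 : |pad Φ (nOf Φ) 0| * QSPaux.ReSum L
        ≤ Real.sinh |pad Φ (nOf Φ) 0| * Real.cosh ((l.map (fun x => |x|)).sum) :=
      mul_le_mul h3 h2 (QSPaux.ReSum_nonneg L) (le_trans (abs_nonneg _) h3)
    have h8 : Real.sinh ((l.map (fun x => |x|)).sum)
        ≤ Real.cosh |pad Φ (nOf Φ) 0| * Real.sinh ((l.map (fun x => |x|)).sum) := by
      nlinarith
    nlinarith
  calc ∑ j ∈ Finset.range N, |E j|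
      ≤ (L.map fun t => ∑ j ∈ Finset.range N, if t.2.1.natAbs = 2*j then |A t| else 0).sum := step2
    _ ≤ (L.map fun t => |A t|).sum := step3
    _ ≤ QSPaux.ImSum L + |pad Φ (nOf Φ) 0| * QSPaux.ReSum L := step4
    _ ≤ Real.sinh (2 * l1 Φ) := final
end
end

section
/- For every k ∈ ℕ and every x ∈ [−1,1], the partial derivative ∂g(x,Φ)/∂φ_k evaluated at Φ = 0 equals 2·T_{2k}(x). Equivalently, ∂F/∂φ_k(0) = 2·e_k for every k ∈ ℕ, i.e. the Jacobian of F at 0 is twice the identity: DF(0) = 2·Id. -/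
open scoped Real
noncomputable section

def Cmat (θ : ℝ) : Matrix (Fin 2) (Fin 2) ℂ :=
  !![(Real.cos θ : ℂ), Complex.I * (Real.sin θ : ℂ);
     Complex.I * (Real.sin θ : ℂ), (Real.cos θ : ℂ)]
lemma expZ_zero : expZ 0 = 1 := by
  simp [expZ, Matrix.one_fin_two]
lemma Cmat_mul (a b : ℝ) : Cmat a * Cmat b = Cmat (a + b) := by
  ext i j
  fin_cases i <;> fin_cases j <;>
    simp [Cmat, Matrix.mul_apply, Fin.sum_univ_two, Real.cos_add, Real.sin_add] <;>
    first
      | linear_combination (Complex.sin (a:ℂ) * Complex.sin (b:ℂ)) * Complex.I_sq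
      | ring
lemma Cmat_zero : Cmat 0 = 1 := by
  simp [Cmat, Matrix.one_fin_two]
lemma Cmat_pow (θ : ℝ) : ∀ m : ℕ, Cmat θ ^ m = Cmat (m * θ)
  | 0 => by simp [Cmat_zero]
  | m + 1 => by
      rw [pow_succ, Cmat_pow θ m, Cmat_mul]
      push_cast
      ring_nf
lemma prod_map_eq_pow {M : Type*} [Monoid M] (A : M) (f : ℕ → M) :
    ∀ l : List ℕ, (∀ j ∈ l, f j = A) → (l.map f).prod = A ^ l.length := by
  intro l
  induction l with
  | nil => simp
  | cons a l ih =>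
      intro h
      simp only [List.map_cons, List.prod_cons, List.length_cons]
      rw [h a (by simp), ih (fun j hj => h j (by simp [hj])), pow_succ']
lemma entry_im (t φ : ℝ) :
    ((expZ t * (Cmat φ * expZ t)) 0 0).im = Real.sin (2 * t) * Real.cos φ := by
  have h : (expZ t * (Cmat φ * expZ t)) 0 0
      = (Real.cos φ : ℂ) * Complex.exp ((2 * t : ℝ) * Complex.I) := by
    simp [expZ, Cmat, Matrix.mul_fin_two]
    rw [mul_comm, mul_assoc, ← Complex.exp_add]
    push_cast
    ring_nf
  rw [h, Complex.mul_im]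
  simp only [Complex.ofReal_re, Complex.ofReal_im, Complex.exp_ofReal_mul_I_im,
    Complex.exp_ofReal_mul_I_re, zero_mul, add_zero]
  ring
lemma update_apply' (k : ℕ) (t : ℝ) (j : ℕ) :
    ((0 : ℕ →₀ ℝ).update k t) j = if j = k then t else 0 := by
  simp [Finsupp.coe_update, Function.update_apply, Finsupp.single_apply, eq_comm]
lemma gred_update (k : ℕ) (t x : ℝ) (hx : x ∈ Set.Icc (-1 : ℝ) 1) :
    gred x ((0 : ℕ →₀ ℝ).update k t)
      = Real.sin (2 * t) * (Polynomial.Chebyshev.T ℝ (2 * (k : ℤ))).eval x := by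
  set θ := Real.arccos x with hθ
  have hcos : Real.cos θ = x := Real.cos_arccos hx.1 hx.2
  have hW : Wmat x = Cmat θ := by
    rw [Wmat, Cmat, Real.sin_arccos, hcos]
  have hT : (Polynomial.Chebyshev.T ℝ (2 * (k : ℤ))).eval x
      = Real.cos ((2 * k : ℕ) * θ) := by
    rw [← hcos, Polynomial.Chebyshev.T_real_cos]
    push_cast
    ring_nf
  by_cases ht : t = 0
  · subst ht
    have h0 : (0 : ℕ →₀ ℝ).update k 0 = 0 := by
      ext j; rw [update_apply']; simp
    rw [h0]
    have hn : nOf (0 : ℕ →₀ ℝ) = 1 := by simp [nOf]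
    simp [gred, hn, gfun, Umat, pad, expZ_zero]
  · set Φ' := (0 : ℕ →₀ ℝ).update k t with hΦ'
    have hn : nOf Φ' = k + 1 := by
      rw [nOf, hΦ', Finsupp.support_update_ne_zero _ _ ht]
      simp
    have hd : 2 * (k + 1) - 2 = 2 * k := by omega
    rw [gred, hn, hd]
    by_cases hk : k = 0
    · subst hk
      have hpad0 : pad Φ' 1 0 = 2 * t := by
        rw [hΦ']
        simp [pad, update_apply']
      simp only [gfun, Umat, mul_zero, List.range_zero, List.map_nil, List.prod_nil, mul_one,
        hpad0]
      rw [hT]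
      simp [expZ]
      rw [show Complex.I * (2 * (t:ℂ)) = ((2 * t : ℝ) : ℂ) * Complex.I by push_cast; ring]
      rw [Complex.exp_ofReal_mul_I_im]
    · have hΨ0 : pad Φ' (k + 1) 0 = t := by
        rw [pad]
        simp only [show 0 + 1 < k + 1 from by omega, if_true]
        rw [update_apply']
        simp
      have hΨmid : ∀ j < 2 * k - 1, pad Φ' (k + 1) (j + 1) = 0 := by
        intro j hj
        rw [pad]
        split_ifs with h1 h2
        · rw [update_apply', if_neg (by omega)]
        · rw [update_apply', if_neg (by omega)]
          ring
        · rw [update_apply', if_neg (by omega)]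
      have hΨlast : pad Φ' (k + 1) (2 * k - 1 + 1) = t := by
        rw [pad]
        have h1 : ¬ (2 * k - 1 + 1 + 1 < k + 1) := by omega
        have h2 : ¬ (2 * k - 1 + 1 + 1 = k + 1) := by omega
        rw [if_neg h1, if_neg h2, update_apply']
        have : 2 * k - 1 + 1 + 1 - (k + 1) = k := by omega
        simp [this]
      have h2k : 2 * k = 2 * k - 1 + 1 := by omega
      rw [gfun, Umat, hΨ0, h2k, List.range_succ, List.map_append, List.prod_append]
      have hmap : ((List.range (2 * k - 1)).map
          fun j => Wmat x * expZ (pad Φ' (k + 1) (j + 1))).prod = Cmat θ ^ (2 * k - 1) := by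
        rw [prod_map_eq_pow (Cmat θ) _ _ (fun j hj => by
          rw [hΨmid j (List.mem_range.mp hj), expZ_zero, mul_one, hW]), List.length_range]
      rw [hmap]
      simp only [List.map_cons, List.map_nil, List.prod_cons, List.prod_nil, mul_one]
      rw [hΨlast, hW]
      rw [show Cmat θ ^ (2 * k - 1) * (Cmat θ * expZ t)
            = Cmat θ ^ (2 * k) * expZ t by rw [← mul_assoc, ← pow_succ, ← h2k],
          Cmat_pow]
      rw [← mul_assoc, mul_assoc]
      rw [entry_im, hT]
lemma int_cos_int (c : ℤ) :
    ∫ θ in (0:ℝ)..(2 * π), Real.cos (c * θ) = if c = 0 then 2 * π else 0 := by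
  by_cases hc : c = 0
  · simp [hc]
  · have hc' : (c : ℝ) ≠ 0 := Int.cast_ne_zero.mpr hc
    rw [if_neg hc]
    rw [intervalIntegral.integral_comp_mul_left Real.cos hc']
    rw [integral_cos]
    have h1 : Real.sin ((c : ℝ) * (2 * π)) = 0 := by
      rw [show (c : ℝ) * (2 * π) = ((2 * c : ℤ) : ℝ) * π by push_cast; ring]
      exact Real.sin_int_mul_pi _
    simp [h1]
lemma cos_orth (m n : ℕ) :
    ∫ θ in (0:ℝ)..(2 * π), Real.cos (2 * m * θ) * Real.cos (2 * n * θ)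
      = if m = n then (if m = 0 then 2 * π else π) else 0 := by
  have hrw : ∀ θ : ℝ, Real.cos (2 * m * θ) * Real.cos (2 * n * θ)
      = (1 / 2) * (Real.cos (((2 * (m:ℤ) - 2 * n : ℤ) : ℝ) * θ)
          + Real.cos (((2 * (m:ℤ) + 2 * n : ℤ) : ℝ) * θ)) := by
    intro θ
    push_cast
    rw [show ((2 * (m:ℝ) - 2 * n) * θ) = 2 * m * θ - 2 * n * θ by ring,
        show ((2 * (m:ℝ) + 2 * n) * θ) = 2 * m * θ + 2 * n * θ by ring,
        Real.cos_sub, Real.cos_add]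
    ring
  simp only [hrw]
  have hint : ∀ c : ℝ, IntervalIntegrable (fun θ => Real.cos (c * θ))
      MeasureTheory.volume (0:ℝ) (2 * π) :=
    fun c => (Real.continuous_cos.comp (continuous_const.mul continuous_id)).intervalIntegrable _ _
  rw [intervalIntegral.integral_const_mul, intervalIntegral.integral_add (hint _) (hint _),
    int_cos_int, int_cos_int]
  by_cases hmn : m = n
  · subst hmn
    by_cases hm : m = 0
    · subst hm
      norm_num
      ring
    · have h1 : (2 * (m:ℤ) - 2 * m : ℤ) = 0 := by ring
      have h2 : ¬ (2 * (m:ℤ) + 2 * m : ℤ) = 0 := by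
        have : 0 < m := Nat.pos_of_ne_zero hm
        omega
      rw [if_pos h1, if_neg h2, if_pos rfl, if_neg hm]
      ring
  · have hmn' : m ≠ n := hmn
    have h1 : ¬ (2 * (m:ℤ) - 2 * n : ℤ) = 0 := by omega
    have h2 : ¬ (2 * (m:ℤ) + 2 * n : ℤ) = 0 := by omega
    rw [if_neg h1, if_neg h2, if_neg hmn]
    ring
lemma Fmap_update (k : ℕ) (t : ℝ) (j : ℕ) :
    Fmap ((0 : ℕ →₀ ℝ).update k t) j = if j = k then Real.sin (2 * t) else 0 := by
  rw [Fmap, chebCoeff]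
  have hg : ∀ θ : ℝ, gred (Real.cos θ) ((0 : ℕ →₀ ℝ).update k t) * Real.cos (2 * j * θ)
      = Real.sin (2 * t) * (Real.cos (2 * k * θ) * Real.cos (2 * j * θ)) := by
    intro θ
    rw [gred_update k t _ ⟨Real.neg_one_le_cos θ, Real.cos_le_one θ⟩,
        Polynomial.Chebyshev.T_real_cos]
    push_cast
    ring
  simp only [hg]
  rw [intervalIntegral.integral_const_mul, cos_orth]
  by_cases hjk : j = k
  · subst hjk
    by_cases hj : j = 0
    · subst hj
      simp only [if_pos rfl, if_true]
      field_simp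
    · simp only [if_pos rfl, if_neg hj, if_true]
      field_simp
  · simp [hjk, Ne.symm hjk]
lemma hasDerivAt_sin2t : HasDerivAt (fun t : ℝ => Real.sin (2 * t)) 2 0 := by
  have h1 : HasDerivAt (fun t : ℝ => 2 * t) 2 0 := by
    simpa using (hasDerivAt_id (0:ℝ)).const_mul 2
  have := (Real.hasDerivAt_sin (2 * 0)).comp 0 h1
  simpa [Function.comp_def] using this

/-- `∂g(x,Φ)/∂φ_k` at `Φ = 0` equals `2 T_{2k}(x)` on `[-1,1]`;
equivalently `∂F/∂φ_k(0) = 2 e_k`, i.e. `DF(0) = 2 Id`. -/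
theorem DF_at_zero (k : ℕ) :
    (∀ x ∈ Set.Icc (-1 : ℝ) 1,
      gredPD k x 0 = 2 * (Polynomial.Chebyshev.T ℝ (2 * (k : ℤ))).eval x) ∧
    (∀ j, FmapPD k 0 j = if j = k then 2 else 0) := by
  constructor
  · intro x hx
    unfold gredPD
    simp only [Finsupp.coe_zero, Pi.zero_apply]
    rw [show (fun t => gred x ((0 : ℕ →₀ ℝ).update k t))
          = fun t => Real.sin (2 * t) * (Polynomial.Chebyshev.T ℝ (2 * (k : ℤ))).eval x
        from funext fun t => gred_update k t x hx]
    rw [(hasDerivAt_sin2t.mul_const _).deriv]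
  · intro j
    unfold FmapPD
    simp only [Finsupp.coe_zero, Pi.zero_apply]
    rw [show (fun t => Fmap ((0 : ℕ →₀ ℝ).update k t) j)
          = fun t => if j = k then Real.sin (2 * t) else 0
        from funext fun t => Fmap_update k t j]
    by_cases hjk : j = k
    · subst hjk
      simp only [if_pos rfl]
      exact hasDerivAt_sin2t.deriv
    · simp [hjk]
end
end

section
/- Let Φ be a finitely supported real sequence with ‖Φ‖₁ ≤ r_Φ, and let n be the effective length of Φ (the smallest n with φ_k = 0 for all k ≥ n). Then the effective length of F(Φ) equals n; that is, F(Φ)_j = 0 for all j ≥ n, and if n ≥ 1 then F(Φ)_{n−1} ≠ 0. -/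
open scoped Real
noncomputable section

section Aux
set_option linter.unnecessarySeqFocus false

lemma ICos (l : ℤ) : ∫ θ in (0:ℝ)..π, Real.cos (l*θ) = if l = 0 then π else 0 := by
  rcases eq_or_ne l 0 with h | h
  · simp [h]
  · have hl : (l:ℝ) ≠ 0 := Int.cast_ne_zero.mpr h
    rw [if_neg h, intervalIntegral.integral_comp_mul_left Real.cos hl]
    simp [integral_cos, Real.sin_int_mul_pi]

lemma ISin (l : ℤ) (hl : Even l) : ∫ θ in (0:ℝ)..π, Real.sin (l*θ) = 0 := by
  rcases eq_or_ne l 0 with h | h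
  · simp [h]
  · have hl' : (l:ℝ) ≠ 0 := Int.cast_ne_zero.mpr h
    rw [intervalIntegral.integral_comp_mul_left Real.sin hl']
    obtain ⟨t, rfl⟩ := hl
    have : ((t:ℝ) + t) * π = t * (2*π) := by ring
    simp [integral_sin, this, Real.cos_int_mul_two_pi]

lemma IC (a b : ℤ) : ∫ θ in (0:ℝ)..π, Real.cos (a*θ) * Real.cos (b*θ)
    = ((if a+b = 0 then π else 0) + (if a-b = 0 then π else 0))/2 := by
  have h : ∀ θ:ℝ, Real.cos (a*θ) * Real.cos (b*θ)
      = (Real.cos ((a+b : ℤ)*θ) + Real.cos ((a-b : ℤ)*θ))/2 := by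
    intro θ
    push_cast
    rw [show ((a:ℝ)+b)*θ = a*θ + b*θ by ring, show ((a:ℝ)-b)*θ = a*θ - b*θ by ring,
      Real.cos_add, Real.cos_sub]
    ring
  simp only [h]
  rw [intervalIntegral.integral_div, intervalIntegral.integral_add]
  · rw [ICos, ICos]
  · exact (Real.continuous_cos.comp (by continuity)).intervalIntegrable _ _
  · exact (Real.continuous_cos.comp (by continuity)).intervalIntegrable _ _

lemma IS (a b : ℤ) (ha : Even a) (hb : Even b) :
    ∫ θ in (0:ℝ)..π, Real.sin (a*θ) * Real.cos (b*θ) = 0 := by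
  have h : ∀ θ:ℝ, Real.sin (a*θ) * Real.cos (b*θ)
      = (Real.sin ((a+b : ℤ)*θ) + Real.sin ((a-b : ℤ)*θ))/2 := by
    intro θ
    push_cast
    rw [show ((a:ℝ)+b)*θ = a*θ + b*θ by ring, show ((a:ℝ)-b)*θ = a*θ - b*θ by ring,
      Real.sin_add, Real.sin_sub]
    ring
  simp only [h]
  rw [intervalIntegral.integral_div, intervalIntegral.integral_add]
  · rw [ISin _ (ha.add hb), ISin _ (ha.sub hb)]; norm_num
  · exact (Real.continuous_sin.comp (by continuity)).intervalIntegrable _ _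
  · exact (Real.continuous_sin.comp (by continuity)).intervalIntegrable _ _

def Wtil (θ : ℝ) : Matrix (Fin 2) (Fin 2) ℂ :=
  !![(Real.cos θ : ℂ), Complex.I * (Real.sin θ : ℂ);
     Complex.I * (Real.sin θ : ℂ), (Real.cos θ : ℂ)]

def Util (θ : ℝ) (d : ℕ) (Ψ : ℕ → ℝ) : Matrix (Fin 2) (Fin 2) ℂ :=
  expZ (Ψ 0) * (((List.range d).map fun j => Wtil θ * expZ (Ψ (j + 1))).prod)

lemma Util_succ (θ : ℝ) (m : ℕ) (Ψ : ℕ → ℝ) :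
    Util θ (m+1) Ψ = Util θ m Ψ * (Wtil θ * expZ (Ψ (m+1))) := by
  rw [Util, Util, List.range_succ, List.map_append, List.prod_append]
  simp [mul_assoc]

def z (θ : ℝ) : ℂ := Complex.exp (θ * Complex.I)

lemma z_ne (θ : ℝ) : z θ ≠ 0 := Complex.exp_ne_zero _

lemma z_inv (θ : ℝ) : (z θ)⁻¹ = Complex.exp (-(θ * Complex.I)) := by
  rw [z, ← Complex.exp_neg]

lemma z_decomp (θ : ℝ) : z θ = Complex.cos θ + Complex.sin θ * Complex.I := Complex.exp_mul_I θ

lemma z_inv_decomp (θ : ℝ) : (z θ)⁻¹ = Complex.cos θ - Complex.sin θ * Complex.I := by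
  rw [z_inv, show -((θ:ℂ) * Complex.I) = (-θ) * Complex.I by ring, Complex.exp_mul_I,
    Complex.cos_neg, Complex.sin_neg]
  ring

lemma cos_eq_z (θ : ℝ) : (Real.cos θ : ℂ) = (z θ + (z θ)⁻¹)/2 := by
  rw [z_inv_decomp, z_decomp, Complex.ofReal_cos]
  ring

lemma isin_eq_z (θ : ℝ) : Complex.I * (Real.sin θ : ℂ) = (z θ - (z θ)⁻¹)/2 := by
  rw [z_inv_decomp, z_decomp, Complex.ofReal_sin]
  ring

lemma shift_up {m : ℕ} (f : ℤ → ℂ) (hf : ∀ k : ℤ, (k < -(m:ℤ) ∨ (m:ℤ) < k) → f k = 0) (θ : ℝ) :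
    ∑ k ∈ Finset.Icc (-((m:ℤ)+1)) ((m:ℤ)+1), f (k-1) * z θ ^ k
      = z θ * ∑ k ∈ Finset.Icc (-(m:ℤ)) m, f k * z θ ^ k := by
  have h1 : Finset.Icc (-((m:ℤ)+1)) ((m:ℤ)+1)
      = Finset.map (addRightEmbedding 1) (Finset.Icc (-(m:ℤ)-2) m) := by
    rw [Finset.map_add_right_Icc]; congr 1 <;> ring
  rw [h1, Finset.sum_map, Finset.mul_sum]
  rw [← Finset.sum_subset (Finset.Icc_subset_Icc (by linarith) le_rfl :
      Finset.Icc (-(m:ℤ)) m ⊆ Finset.Icc (-(m:ℤ)-2) m)]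
  · apply Finset.sum_congr rfl
    intro k _
    simp only [addRightEmbedding_apply, add_sub_cancel_right]
    rw [zpow_add₀ (z_ne θ), zpow_one]
    ring
  · intro k hk hk2
    simp only [Finset.mem_Icc] at hk hk2
    have : f k = 0 := hf k (by omega)
    simp [this]

lemma shift_down {m : ℕ} (f : ℤ → ℂ) (hf : ∀ k : ℤ, (k < -(m:ℤ) ∨ (m:ℤ) < k) → f k = 0) (θ : ℝ) :
    ∑ k ∈ Finset.Icc (-((m:ℤ)+1)) ((m:ℤ)+1), f (k+1) * z θ ^ k
      = (z θ)⁻¹ * ∑ k ∈ Finset.Icc (-(m:ℤ)) m, f k * z θ ^ k := by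
  have h1 : Finset.Icc (-((m:ℤ)+1)) ((m:ℤ)+1)
      = Finset.map (addRightEmbedding (-1)) (Finset.Icc (-(m:ℤ)) ((m:ℤ)+2)) := by
    rw [Finset.map_add_right_Icc]; congr 1 <;> ring
  rw [h1, Finset.sum_map, Finset.mul_sum]
  rw [← Finset.sum_subset (Finset.Icc_subset_Icc le_rfl (by linarith) :
      Finset.Icc (-(m:ℤ)) m ⊆ Finset.Icc (-(m:ℤ)) ((m:ℤ)+2))]
  · apply Finset.sum_congr rfl
    intro k _
    simp only [addRightEmbedding_apply]
    rw [show k + -1 + 1 = k by ring, show k + -1 = k - 1 by ring,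
      zpow_sub₀ (z_ne θ), zpow_one]
    ring
  · intro k hk hk2
    simp only [Finset.mem_Icc] at hk hk2
    have : f k = 0 := hf k (by omega)
    simp [this]

lemma rep (Ψ : ℕ → ℝ) (m : ℕ) : ∃ u v : ℤ → ℂ,
    (∀ k : ℤ, (k < -(m:ℤ) ∨ (m:ℤ) < k) → u k = 0 ∧ v k = 0) ∧
    (∀ k : ℤ, ¬ Even (k + m) → u k = 0 ∧ v k = 0) ∧
    (∀ θ : ℝ, Util θ m Ψ 0 0 = (∑ k ∈ Finset.Icc (-(m:ℤ)) m, u k * z θ ^ k)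
        + ∑ k ∈ Finset.Icc (-(m:ℤ)) m, v k * z θ ^ k) ∧
    (∀ θ : ℝ, Util θ m Ψ 0 1 = (∑ k ∈ Finset.Icc (-(m:ℤ)) m, u k * z θ ^ k)
        - ∑ k ∈ Finset.Icc (-(m:ℤ)) m, v k * z θ ^ k) ∧
    u m = Complex.exp (Complex.I * (Ψ 0:ℂ)) / 2 * ∏ i ∈ Finset.Icc 1 m, (Real.cos (Ψ i) : ℂ) ∧
    v (-(m:ℤ)) = Complex.exp (Complex.I * (Ψ 0:ℂ)) / 2 * ∏ i ∈ Finset.Icc 1 m, (Real.cos (Ψ i) : ℂ) ∧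
    (1 ≤ m → v m = Complex.I * (Real.sin (Ψ m):ℂ) * (Complex.exp (Complex.I * (Ψ 0:ℂ)) / 2)
          * ∏ i ∈ Finset.Icc 1 (m-1), (Real.cos (Ψ i) : ℂ) ∧
        u (-(m:ℤ)) = Complex.I * (Real.sin (Ψ m):ℂ) * (Complex.exp (Complex.I * (Ψ 0:ℂ)) / 2)
          * ∏ i ∈ Finset.Icc 1 (m-1), (Real.cos (Ψ i):ℂ)) := by
  induction m with
  | zero =>
    refine ⟨fun k => if k = 0 then Complex.exp (Complex.I * (Ψ 0:ℂ))/2 else 0,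
            fun k => if k = 0 then Complex.exp (Complex.I * (Ψ 0:ℂ))/2 else 0,
            ?_, ?_, ?_, ?_, ?_, ?_, ?_⟩
    · intro k hk
      have : k ≠ 0 := by omega
      simp [this]
    · intro k hk
      have : k ≠ 0 := by
        intro h; exact hk (by simp [h])
      simp [this]
    · intro θ
      simp [Util, expZ, Matrix.mul_apply]
    · intro θ
      simp [Util, expZ, Matrix.mul_apply]
    · simp
    · simp
    · intro h; omega
  | succ m ih =>
    obtain ⟨u, v, hsupp, hpar, h00, h01, hum, hvm, htop⟩ := ih
    have hcast : ((m+1:ℕ):ℤ) = (m:ℤ)+1 := by push_cast; ring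
    have hB : ∀ θ : ℝ, Wtil θ * expZ (Ψ (m+1)) =
        !![(Real.cos θ:ℂ) * Complex.exp (Complex.I * (Ψ (m+1):ℂ)),
           Complex.I * (Real.sin θ:ℂ) * Complex.exp (-(Complex.I * (Ψ (m+1):ℂ)));
           Complex.I * (Real.sin θ:ℂ) * Complex.exp (Complex.I * (Ψ (m+1):ℂ)),
           (Real.cos θ:ℂ) * Complex.exp (-(Complex.I * (Ψ (m+1):ℂ)))] := by
      intro θ
      rw [Wtil, expZ, Matrix.mul_fin_two]
      norm_num
    have hexp : Complex.exp (Complex.I * (Ψ (m+1):ℂ))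
        = (Real.cos (Ψ (m+1)) : ℂ) + Complex.I * (Real.sin (Ψ (m+1)) : ℂ) := by
      rw [mul_comm, Complex.exp_mul_I, Complex.ofReal_cos, Complex.ofReal_sin]
      ring
    have hexp' : Complex.exp (-(Complex.I * (Ψ (m+1):ℂ)))
        = (Real.cos (Ψ (m+1)) : ℂ) - Complex.I * (Real.sin (Ψ (m+1)) : ℂ) := by
      rw [show -(Complex.I * (Ψ (m+1):ℂ)) = ((-(Ψ (m+1)):ℝ):ℂ) * Complex.I by push_cast; ring,
        Complex.exp_mul_I, Complex.ofReal_cos, Complex.ofReal_sin]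
      push_cast
      rw [Complex.cos_neg, Complex.sin_neg]
      ring
    have hQ : ∀ C S : ℂ, ∀ θ : ℝ, ∑ k ∈ Finset.Icc (-((m:ℤ)+1)) ((m:ℤ)+1),
          (C * u (k-1) + S * v (k+1)) * z θ ^ k
        = C * (z θ * ∑ k ∈ Finset.Icc (-(m:ℤ)) m, u k * z θ ^ k)
          + S * ((z θ)⁻¹ * ∑ k ∈ Finset.Icc (-(m:ℤ)) m, v k * z θ ^ k) := by
      intro C S θ
      rw [← shift_up u (fun k hk => (hsupp k hk).1) θ,
        ← shift_down v (fun k hk => (hsupp k hk).2) θ, Finset.mul_sum, Finset.mul_sum,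
        ← Finset.sum_add_distrib]
      apply Finset.sum_congr rfl
      intro k _
      ring
    refine ⟨fun k => (Real.cos (Ψ (m+1)) : ℂ) * u (k-1)
          + Complex.I * (Real.sin (Ψ (m+1)) : ℂ) * v (k+1),
        fun k => Complex.I * (Real.sin (Ψ (m+1)) : ℂ) * u (k-1)
          + (Real.cos (Ψ (m+1)) : ℂ) * v (k+1), ?_, ?_, ?_, ?_, ?_, ?_, ?_⟩
    · intro k hk
      rw [hcast] at hk
      have hu : u (k-1) = 0 := (hsupp _ (by omega)).1
      have hv : v (k+1) = 0 := (hsupp _ (by omega)).2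
      simp [hu, hv]
    · intro k hk
      rw [hcast] at hk
      have hu : u (k-1) = 0 := (hpar _ (by
        intro h2; apply hk
        rw [Int.even_iff] at h2 ⊢; omega)).1
      have hv : v (k+1) = 0 := (hpar _ (by
        intro h2; apply hk
        rw [Int.even_iff] at h2 ⊢; omega)).2
      simp [hu, hv]
    · intro θ
      rw [Util_succ, Matrix.mul_apply, Fin.sum_univ_two, h00 θ, h01 θ, hB θ, hcast]
      simp only [Matrix.of_apply, Matrix.cons_val', Matrix.cons_val_zero, Matrix.cons_val_one,
        Matrix.head_cons, Matrix.empty_val', Matrix.cons_val_fin_one, Matrix.head_fin_const]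
      rw [hQ _ _ θ, hQ _ _ θ, hexp, cos_eq_z θ, isin_eq_z θ]
      ring
    · intro θ
      rw [Util_succ, Matrix.mul_apply, Fin.sum_univ_two, h00 θ, h01 θ, hB θ, hcast]
      simp only [Matrix.of_apply, Matrix.cons_val', Matrix.cons_val_zero, Matrix.cons_val_one,
        Matrix.head_cons, Matrix.empty_val', Matrix.cons_val_fin_one, Matrix.head_fin_const]
      rw [hQ _ _ θ, hQ _ _ θ, hexp', cos_eq_z θ, isin_eq_z θ]
      ring
    · beta_reduce
      rw [hcast, show (m:ℤ) + 1 - 1 = (m:ℤ) by ring]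
      have h2 : v ((m:ℤ)+1+1) = 0 := (hsupp _ (by omega)).2
      rw [h2, hum, Finset.prod_Icc_succ_top (Nat.le_add_left 1 m)]
      ring
    · beta_reduce
      rw [hcast, show -((m:ℤ) + 1) + 1 = -(m:ℤ) by ring]
      have h1 : u (-((m:ℤ)+1)-1) = 0 := (hsupp _ (by omega)).1
      rw [h1, hvm, Finset.prod_Icc_succ_top (Nat.le_add_left 1 m)]
      ring
    · intro _
      constructor
      · beta_reduce
        rw [hcast, show (m:ℤ) + 1 - 1 = (m:ℤ) by ring]
        have h2 : v ((m:ℤ)+1+1) = 0 := (hsupp _ (by omega)).2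
        rw [h2, hum]
        simp only [Nat.add_sub_cancel]
        ring
      · beta_reduce
        rw [hcast, show -((m:ℤ) + 1) + 1 = -(m:ℤ) by ring]
        have h1 : u (-((m:ℤ)+1)-1) = 0 := (hsupp _ (by omega)).1
        rw [h1, hvm]
        simp only [Nat.add_sub_cancel]
        ring


lemma Wmat_cos {θ : ℝ} (h : 0 ≤ Real.sin θ) : Wmat (Real.cos θ) = Wtil θ := by
  have h1 : Real.sqrt (1 - Real.cos θ ^ 2) = Real.sin θ := by
    rw [show 1 - Real.cos θ ^ 2 = Real.sin θ ^ 2 by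
      have := Real.sin_sq_add_cos_sq θ; linarith]
    exact Real.sqrt_sq h
  rw [Wmat, Wtil, h1]

lemma Umat_cos {θ : ℝ} (h : 0 ≤ Real.sin θ) (d : ℕ) (Ψ : ℕ → ℝ) :
    Umat (Real.cos θ) d Ψ = Util θ d Ψ := by
  rw [Umat, Util, Wmat_cos h]

lemma continuous_Wmat : Continuous Wmat := by
  apply continuous_matrix
  intro i j
  fin_cases i <;> fin_cases j <;> simp [Wmat] <;> fun_prop

lemma cont_Umat (d : ℕ) (Ψ : ℕ → ℝ) : Continuous fun x => Umat x d Ψ := by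
  unfold Umat
  apply Continuous.matrix_mul continuous_const
  induction d with
  | zero => simp only [List.range_zero, List.map_nil, List.prod_nil]; exact continuous_const
  | succ m ih =>
    simp only [List.range_succ, List.map_append, List.prod_append, List.map_cons, List.map_nil,
      List.prod_cons, List.prod_nil, mul_one]
    exact ih.matrix_mul (continuous_Wmat.matrix_mul continuous_const)

lemma cont_gfun (d : ℕ) (Ψ : ℕ → ℝ) : Continuous fun x => gfun x d Ψ :=
  Complex.continuous_im.comp ((cont_Umat d Ψ).matrix_elem 0 0)

lemma cheb_integral (d j : ℕ) (hd : Even d) (Ψ : ℕ → ℝ) (u v : ℤ → ℂ)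
    (hsupp : ∀ k : ℤ, (k < -(d:ℤ) ∨ (d:ℤ) < k) → u k = 0 ∧ v k = 0)
    (hpar : ∀ k : ℤ, ¬ Even (k + d) → u k = 0 ∧ v k = 0)
    (h00 : ∀ θ : ℝ, Util θ d Ψ 0 0 = (∑ k ∈ Finset.Icc (-(d:ℤ)) d, u k * z θ ^ k)
        + ∑ k ∈ Finset.Icc (-(d:ℤ)) d, v k * z θ ^ k) :
    ∫ θ in (0:ℝ)..(2*π), gfun (Real.cos θ) d Ψ * Real.cos (2*j*θ)
      = ∑ k ∈ Finset.Icc (-(d:ℤ)) d, (u k + v k).im *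
          ((if k = -(2*j:ℤ) then π else 0) + (if k = (2*j:ℤ) then π else 0)) := by
  have hcont : Continuous fun θ : ℝ => gfun (Real.cos θ) d Ψ * Real.cos (2*j*θ) := by
    exact ((cont_gfun d Ψ).comp Real.continuous_cos).mul (by fun_prop)
  have hsym : ∀ x : ℝ, gfun (Real.cos (2*π - x)) d Ψ * Real.cos (2*j*(2*π - x))
      = gfun (Real.cos x) d Ψ * Real.cos (2*j*x) := by
    intro x
    rw [Real.cos_two_pi_sub]
    congr 1
    have h1 : 2*(j:ℝ)*(2*π - x) = ((4*j:ℤ):ℝ)*π - 2*(j:ℝ)*x := by push_cast; ring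
    have h2 : ((4*j:ℤ):ℝ)*π = ((2*j:ℤ):ℝ)*(2*π) := by push_cast; ring
    rw [h1, Real.cos_sub, Real.sin_int_mul_pi, h2, Real.cos_int_mul_two_pi]
    ring
  have hsplit : ∫ θ in (0:ℝ)..(2*π), gfun (Real.cos θ) d Ψ * Real.cos (2*j*θ)
      = 2 * ∫ θ in (0:ℝ)..π, gfun (Real.cos θ) d Ψ * Real.cos (2*j*θ) := by
    rw [← intervalIntegral.integral_add_adjacent_intervals (b := π)
      (hcont.intervalIntegrable _ _) (hcont.intervalIntegrable _ _)]
    have h3 := intervalIntegral.integral_comp_sub_left (a := 0) (b := π)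
      (fun θ => gfun (Real.cos θ) d Ψ * Real.cos (2*j*θ)) (2*π)
    simp only [hsym] at h3
    rw [show 2*π - π = π by ring, show 2*π - (0:ℝ) = 2*π by ring] at h3
    rw [← h3]
    ring
  rw [hsplit]
  have hEq : Set.EqOn (fun θ : ℝ => gfun (Real.cos θ) d Ψ * Real.cos (2*j*θ))
      (fun θ : ℝ => (∑ k ∈ Finset.Icc (-(d:ℤ)) d,
        ((u k + v k).re * Real.sin (k*θ) + (u k + v k).im * Real.cos (k*θ)) * Real.cos (2*j*θ)))
      (Set.uIcc 0 π) := by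
    intro θ hθ
    rw [Set.uIcc_of_le Real.pi_pos.le] at hθ
    have hs : 0 ≤ Real.sin θ := Real.sin_nonneg_of_nonneg_of_le_pi hθ.1 hθ.2
    show gfun (Real.cos θ) d Ψ * Real.cos (2*j*θ) = _
    rw [gfun, Umat_cos hs, h00 θ, ← Finset.sum_add_distrib]
    rw [show (∑ k ∈ Finset.Icc (-(d:ℤ)) d, (u k * z θ ^ k + v k * z θ ^ k))
      = ∑ k ∈ Finset.Icc (-(d:ℤ)) d, (u k + v k) * z θ ^ k from
      Finset.sum_congr rfl fun k _ => by ring]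
    rw [Complex.im_sum, Finset.sum_mul]
    apply Finset.sum_congr rfl
    intro k _
    congr 1
    have hzk : z θ ^ k = Complex.exp (((k*θ:ℝ):ℂ) * Complex.I) := by
      rw [z, ← Complex.exp_int_mul]
      congr 1
      push_cast
      ring
    rw [hzk, Complex.exp_mul_I, ← Complex.ofReal_cos, ← Complex.ofReal_sin]
    simp only [Complex.mul_im, Complex.add_re, Complex.add_im, Complex.mul_re,
      Complex.ofReal_re, Complex.ofReal_im, Complex.I_re, Complex.I_im]
    push_cast
    ring
  rw [intervalIntegral.integral_congr hEq]
  rw [intervalIntegral.integral_finset_sum (fun k _ => (Continuous.intervalIntegrable (by fun_prop) _ _))]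
  rw [Finset.mul_sum]
  apply Finset.sum_congr rfl
  intro k hk
  by_cases hke : Even (k + d)
  · have hkeven : Even k := by
      rcases hke with ⟨a, ha⟩; rcases hd with ⟨b, hb⟩
      exact ⟨a - b, by omega⟩
    have i1 : IntervalIntegrable
        (fun θ : ℝ => (u k + v k).re * (Real.sin ((k:ℝ)*θ) * Real.cos (((2*(j:ℤ) : ℤ):ℝ)*θ)))
        MeasureTheory.volume 0 π := Continuous.intervalIntegrable (by fun_prop) _ _
    have i2 : IntervalIntegrable
        (fun θ : ℝ => (u k + v k).im * (Real.cos ((k:ℝ)*θ) * Real.cos (((2*(j:ℤ) : ℤ):ℝ)*θ)))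
        MeasureTheory.volume 0 π := Continuous.intervalIntegrable (by fun_prop) _ _
    have e1 : (∫ θ in (0:ℝ)..π,
        ((u k + v k).re * Real.sin (k*θ) + (u k + v k).im * Real.cos (k*θ)) * Real.cos (2*j*θ))
        = ∫ θ in (0:ℝ)..π,
          ((u k + v k).re * (Real.sin ((k:ℝ)*θ) * Real.cos (((2*(j:ℤ) : ℤ):ℝ)*θ))
            + (u k + v k).im * (Real.cos ((k:ℝ)*θ) * Real.cos (((2*(j:ℤ) : ℤ):ℝ)*θ))) := by
      apply intervalIntegral.integral_congr
      intro θ _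
      push_cast
      ring
    rw [e1, intervalIntegral.integral_add i1 i2, intervalIntegral.integral_const_mul,
      intervalIntegral.integral_const_mul, IS k (2*(j:ℤ)) hkeven ⟨(j:ℤ), by ring⟩,
      IC k (2*(j:ℤ))]
    simp only [show (k + 2*(j:ℤ) = 0) ↔ (k = -(2*(j:ℤ))) from by omega,
      show (k - 2*(j:ℤ) = 0) ↔ (k = 2*(j:ℤ)) from by omega]
    ring
  · have h0 : u k + v k = 0 := by rw [(hpar k hke).1, (hpar k hke).2, add_zero]
    have e1 : (∫ θ in (0:ℝ)..π,
        ((u k + v k).re * Real.sin (k*θ) + (u k + v k).im * Real.cos (k*θ)) * Real.cos (2*j*θ))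
        = 0 := by
      rw [show (fun θ : ℝ =>
          ((u k + v k).re * Real.sin (k*θ) + (u k + v k).im * Real.cos (k*θ)) * Real.cos (2*j*θ))
        = fun _ : ℝ => (0:ℝ) from funext fun θ => by rw [h0]; simp]
      simp
    rw [e1, h0]
    simp

lemma im_helper (c p : ℝ) :
    (Complex.exp (Complex.I * (c:ℂ)) / 2 * ((p:ℝ):ℂ)).im = Real.sin c / 2 * p := by
  have h : Complex.exp (Complex.I*(c:ℂ))/2 * ((p:ℝ):ℂ)
      = ((p/2 : ℝ):ℂ) * Complex.exp ((c:ℝ)*Complex.I) := by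
    rw [mul_comm Complex.I]; push_cast; ring
  rw [h]
  simp only [Complex.mul_im, Complex.ofReal_re, Complex.ofReal_im,
    Complex.exp_ofReal_mul_I_im, Complex.exp_ofReal_mul_I_re]
  ring

lemma l1_nonneg (Φ : ℕ →₀ ℝ) : 0 ≤ l1 Φ := Finset.sum_nonneg (fun _ _ => abs_nonneg _)

lemma abs_le_l1 (Φ : ℕ →₀ ℝ) (k : ℕ) : |Φ k| ≤ l1 Φ := by
  by_cases h : Φ k = 0
  · rw [h, abs_zero]; exact l1_nonneg Φ
  · exact Finset.single_le_sum (f := fun i => |Φ i|) (fun _ _ => abs_nonneg _)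
      (Finsupp.mem_support_iff.mpr h)

lemma log_lt_half_pi : Real.log (2 + Real.sqrt 3) < π/2 := by
  have h3 : (Real.sqrt 3)^2 = 3 := Real.sq_sqrt (by norm_num)
  have hs3 : Real.sqrt 3 < 2 := by nlinarith [Real.sqrt_nonneg 3]
  have hlog : Real.log (2 + Real.sqrt 3) < Real.log 4 :=
    Real.log_lt_log (by positivity) (by linarith)
  have h4 : Real.log 4 = 2 * Real.log 2 := by
    rw [show (4:ℝ) = 2^2 by norm_num, Real.log_pow]; push_cast; ring
  have h2 := Real.log_two_lt_d9
  have hπ := Real.pi_gt_d6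
  rw [h4] at hlog
  nlinarith

end Aux

/-- if `‖Φ‖₁ ≤ r_Φ` and `n` is the effective length of `Φ`, then the
effective length of `F(Φ)` equals `n`. -/
theorem Fmap_effective_length (Φ : ℕ →₀ ℝ) (hΦ : l1 Φ ≤ rPhi) (n : ℕ)
    (hsupp : ∀ k, n ≤ k → Φ k = 0) (heff : 1 ≤ n → Φ (n - 1) ≠ 0) :
    (∀ j, n ≤ j → Fmap Φ j = 0) ∧ (1 ≤ n → Fmap Φ (n - 1) ≠ 0) := by
  rcases Nat.eq_zero_or_pos n with hn0 | hn1
  · -- n = 0 : Φ = 0 and all coefficients vanish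
    subst hn0
    have hΦ0 : Φ = 0 := Finsupp.ext fun k => hsupp k (Nat.zero_le k)
    subst hΦ0
    refine ⟨fun j _ => ?_, fun h => absurd h (by omega)⟩
    have hg : ∀ x : ℝ, gred x 0 = 0 := by
      intro x
      have hn : nOf (0 : ℕ →₀ ℝ) = 1 := by simp [nOf]
      rw [gred, hn]
      show (Umat x (2*1-2) (pad 0 1) 0 0).im = 0
      have hp0 : pad (0 : ℕ →₀ ℝ) 1 0 = 0 := by simp [pad]
      show (Umat x 0 (pad 0 1) 0 0).im = 0
      rw [Umat, hp0]
      simp [expZ, Matrix.mul_apply]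
    simp only [Fmap, chebCoeff, hg]
    simp
  · -- n ≥ 1
    have hnOf : nOf Φ = n := by
      have hub : Φ.support.sup id ≤ n - 1 := by
        apply Finset.sup_le
        intro k hk
        have hne := Finsupp.mem_support_iff.mp hk
        have : ¬ (n ≤ k) := fun hle => hne (hsupp k hle)
        simp only [id]
        omega
      have hlb : n - 1 ≤ Φ.support.sup id :=
        Finset.le_sup (f := id) (Finsupp.mem_support_iff.mpr (heff hn1))
      rw [nOf]
      omega
    set d := 2*n - 2 with hdd
    have hd : Even d := ⟨n-1, by omega⟩
    -- bound on the padded phases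
    have hpadb : ∀ i, |pad Φ n i| ≤ 2 * l1 Φ := by
      intro i
      rw [pad]
      have hl := l1_nonneg Φ
      split_ifs with h1 h2
      · calc |Φ (n-1-i)| ≤ l1 Φ := abs_le_l1 Φ _
          _ ≤ 2 * l1 Φ := by linarith
      · rw [abs_mul, abs_two]
        have := abs_le_l1 Φ 0
        linarith
      · calc |Φ (i+1-n)| ≤ l1 Φ := abs_le_l1 Φ _
          _ ≤ 2 * l1 Φ := by linarith
    have hrp : 2 * l1 Φ < π/2 := by
      have h1 : 2 * rPhi = Real.log (2 + Real.sqrt 3) := by rw [rPhi]; ring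
      have := log_lt_half_pi
      linarith
    have hcos : ∀ i, 0 < Real.cos (pad Φ n i) := by
      intro i
      apply Real.cos_pos_of_mem_Ioo
      exact Set.mem_Ioo.mpr (abs_lt.mp (lt_of_le_of_lt (hpadb i) hrp))
    have hsin : Real.sin (2 * Φ (n-1)) ≠ 0 := by
      have habs : |2 * Φ (n-1)| ≤ 2 * l1 Φ := by
        rw [abs_mul, abs_two]
        have := abs_le_l1 Φ (n-1)
        linarith
      have hππ : |2 * Φ (n-1)| < π := by
        have := Real.pi_pos
        linarith [lt_of_le_of_lt habs hrp]
      obtain ⟨hl, hr⟩ := abs_lt.mp hππ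
      intro h0
      rw [Real.sin_eq_zero_iff_of_lt_of_lt hl hr] at h0
      exact heff hn1 (by linarith)
    obtain ⟨u, v, hsuppuv, hpar, h00, h01, hum, hvm, htop⟩ := rep (pad Φ n) d
    have hgred : ∀ x, gred x Φ = gfun x d (pad Φ n) := by
      intro x
      rw [gred, hnOf]
    constructor
    · intro j hj
      rw [Fmap]
      simp only [chebCoeff, hgred]
      rw [cheb_integral d j hd (pad Φ n) u v hsuppuv hpar h00]
      have hz : ∑ k ∈ Finset.Icc (-(d:ℤ)) d, (u k + v k).im *
          ((if k = -(2*j:ℤ) then π else 0) + (if k = (2*j:ℤ) then π else 0)) = 0 := by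
        apply Finset.sum_eq_zero
        intro k hk
        rw [Finset.mem_Icc] at hk
        rw [if_neg (by omega), if_neg (by omega)]
        ring
      rw [hz, mul_zero]
    · intro _
      rw [Fmap]
      simp only [chebCoeff, hgred]
      rw [cheb_integral d (n-1) hd (pad Φ n) u v hsuppuv hpar h00]
      rcases Nat.lt_or_ge n 2 with hn2 | hn2
      · -- n = 1
        have hn1' : n = 1 := by omega
        have hd0 : d = 0 := by omega
        subst hn1'
        rw [hd0] at hum hvm ⊢
        rw [Finset.Icc_eq_empty (by omega), Finset.prod_empty, mul_one] at hum hvm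
        push_cast at hum hvm ⊢
        rw [neg_zero] at hvm ⊢
        rw [Finset.Icc_self, Finset.sum_singleton]
        have himuv : (u 0 + v 0).im = Real.sin (pad Φ 1 0) := by
          rw [hum, hvm, show Complex.exp (Complex.I * ((pad Φ 1 0 : ℝ):ℂ))/2
              + Complex.exp (Complex.I * ((pad Φ 1 0 : ℝ):ℂ))/2
            = Complex.exp (((pad Φ 1 0 : ℝ):ℂ) * Complex.I) by rw [mul_comm]; ring]
          exact Complex.exp_ofReal_mul_I_im _
        have hpad0 : pad Φ 1 0 = 2 * Φ 0 := by simp [pad]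
        rw [himuv, hpad0]
        have hs0 : Real.sin (2 * Φ 0) ≠ 0 := by simpa using hsin
        have h2π : (2:ℝ)*π ≠ 0 := (by positivity : (0:ℝ) < 2*π).ne'
        simp only [eq_self_iff_true, if_true]
        have heval : 1/(2*π) * (Real.sin (2 * Φ 0) * (π + π)) = Real.sin (2 * Φ 0) := by
          rw [show π + π = 2*π by ring, one_div_mul_eq_div, mul_div_assoc,
            div_self h2π, mul_one]
        rw [heval]
        exact hs0
      · -- n ≥ 2
        have hjn : n - 1 ≠ 0 := by omega
        rw [if_neg hjn]
        have hd1 : 1 ≤ d := by omega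
        have hdne : (d:ℤ) ≠ 0 := by omega
        obtain ⟨hvd, hud⟩ := htop hd1
        have hDcast : (2 * ((n-1:ℕ):ℤ)) = (d:ℤ) := by omega
        rw [hDcast]
        have hprodsplit : (∏ i ∈ Finset.Icc 1 d, (Real.cos (pad Φ n i) : ℂ))
            = (∏ i ∈ Finset.Icc 1 (d-1), (Real.cos (pad Φ n i) : ℂ))
              * (Real.cos (pad Φ n d) : ℂ) := by
          conv_lhs => rw [show d = (d-1)+1 from (Nat.sub_add_cancel hd1).symm]
          rw [Finset.prod_Icc_succ_top (by omega), Nat.sub_add_cancel hd1]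
        have hexpd : Complex.exp (Complex.I * ((pad Φ n d : ℝ):ℂ))
            = (Real.cos (pad Φ n d) : ℂ) + Complex.I * (Real.sin (pad Φ n d) : ℂ) := by
          rw [mul_comm, Complex.exp_mul_I, Complex.ofReal_cos, Complex.ofReal_sin]
          ring
        set P : ℝ := ∏ i ∈ Finset.Icc 1 (d-1), Real.cos (pad Φ n i) with hP
        have hPc : ((P:ℝ):ℂ) = ∏ i ∈ Finset.Icc 1 (d-1), (Real.cos (pad Φ n i) : ℂ) :=
          Complex.ofReal_prod _ _
        have hcc : ((pad Φ n 0 + pad Φ n d : ℝ):ℂ) = (pad Φ n 0 : ℂ) + (pad Φ n d : ℂ) := by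
          push_cast
          ring
        have hcore : u (d:ℤ) + v (d:ℤ)
            = Complex.exp (Complex.I * ((pad Φ n 0 + pad Φ n d : ℝ):ℂ)) / 2 * ((P:ℝ):ℂ) := by
          rw [hum, hvd, hprodsplit, hPc, hcc, mul_add, Complex.exp_add, hexpd]
          ring
        have hcore' : u (-(d:ℤ)) + v (-(d:ℤ))
            = Complex.exp (Complex.I * ((pad Φ n 0 + pad Φ n d : ℝ):ℂ)) / 2 * ((P:ℝ):ℂ) := by
          rw [hud, hvm, hprodsplit, hPc, hcc, mul_add, Complex.exp_add, hexpd]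
          ring
        have hsum : ∑ k ∈ Finset.Icc (-(d:ℤ)) d, (u k + v k).im *
            ((if k = -(d:ℤ) then π else 0) + (if k = (d:ℤ) then π else 0))
            = ((u (-(d:ℤ)) + v (-(d:ℤ))).im + (u (d:ℤ) + v (d:ℤ)).im) * π := by
          have hterm : ∀ k ∈ Finset.Icc (-(d:ℤ)) d, (u k + v k).im *
              ((if k = -(d:ℤ) then π else 0) + (if k = (d:ℤ) then π else 0))
              = (if k = -(d:ℤ) then (u (-(d:ℤ)) + v (-(d:ℤ))).im * π else 0)
                + (if k = (d:ℤ) then (u (d:ℤ) + v (d:ℤ)).im * π else 0) := by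
            intro k _
            by_cases h1 : k = -(d:ℤ)
            · have h2 : ¬ (k = (d:ℤ)) := by omega
              rw [if_pos h1, if_neg h2, if_pos h1, if_neg h2, h1]
              ring
            · by_cases h2 : k = (d:ℤ)
              · rw [if_neg h1, if_pos h2, if_neg h1, if_pos h2, h2]
                ring
              · rw [if_neg h1, if_neg h2, if_neg h1, if_neg h2]
                ring
          rw [Finset.sum_congr rfl hterm, Finset.sum_add_distrib,
            Finset.sum_ite_eq' _ (-(d:ℤ)), Finset.sum_ite_eq' _ ((d:ℤ)),
            if_pos (Finset.mem_Icc.mpr (by omega)), if_pos (Finset.mem_Icc.mpr (by omega))]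
          ring
        rw [hsum, hcore, hcore', im_helper]
        have hpad0 : pad Φ n 0 = Φ (n-1) := by
          rw [pad, if_pos (by omega)]
          congr 1
        have hpadd : pad Φ n d = Φ (n-1) := by
          rw [pad, if_neg (by omega), if_neg (by omega)]
          congr 1
          omega
        rw [hpad0, hpadd, show Φ (n-1) + Φ (n-1) = 2 * Φ (n-1) by ring]
        have hPpos : 0 < P := Finset.prod_pos (fun i _ => hcos i)
        have hπ := Real.pi_ne_zero
        have heval : 1/π * ((Real.sin (2 * Φ (n-1)) / 2 * P + Real.sin (2 * Φ (n-1)) / 2 * P) * π)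
            = Real.sin (2 * Φ (n-1)) * P := by
          field_simp
          ring
        rw [heval]
        exact mul_ne_zero hsin hPpos.ne'
end
end
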